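/- arXiv:2603.17005 — 4 statements merged into one kernel-verified Lean document; each statement's English description precedes it below -/
import Mathlib

section
/- Quantum Sibson identity for the Petz Rényi divergence: Let A and B be nonempty finite types, α ∈ (0,1), ρ_AB a bipartite state on A × B, and σ_A a state on A. Let N be the matrix on B given by N b b' := ∑ a, ((σ_A^α ⊗ 1_B) · ρ_AB^(1−α)) (a,b) (a,b') (the partial trace over A of (σ_A^α ⊗ 1_B) · ρ_AB^(1−α)), and assume Tr N ≠ 0. Define τ̂_B := N^(1/(1−α)) / Tr[N^(1/(1−α))]. Then τ̂_B is a state on B and for every state τ_B on B: (i) Q_α(σ_A ⊗ τ_B ‖ ρ_AB) = Q_α(σ_A ⊗ τ̂_B ‖ ρ_AB) · Q_α(τ_B ‖ τ̂_B); (ii) D_α(σ_A ⊗ τ_B ‖ ρ_AB) = D_α(σ_A ⊗ τ̂_B ‖ ρ_AB) + D_α(τ_B ‖ τ̂_B), where both sides are +∞ exactly when Q_α(τ_B ‖ τ̂_B) = 0. -/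
open scoped BigOperators Kronecker ComplexOrder

noncomputable section

/-- Matrix power on the support via spectral decomposition (convention `0 ^ p = 0`);
junk value `0` for non-Hermitian matrices. -/
noncomputable def mpow {A : Type*} [Fintype A] [DecidableEq A] (X : Matrix A A ℂ) (p : ℝ) :
    Matrix A A ℂ :=
  if h : X.IsHermitian then
    (h.eigenvectorUnitary : Matrix A A ℂ) *
      Matrix.diagonal (fun i =>
        ((if h.eigenvalues i = 0 then (0 : ℝ) else (h.eigenvalues i) ^ p : ℝ) : ℂ)) *
      (star (h.eigenvectorUnitary : Matrix A A ℂ))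
  else 0

/-- Matrix logarithm via spectral decomposition (`Real.log 0 = 0`); junk value `0`
for non-Hermitian matrices. -/
noncomputable def mlog {A : Type*} [Fintype A] [DecidableEq A] (X : Matrix A A ℂ) :
    Matrix A A ℂ :=
  if h : X.IsHermitian then
    (h.eigenvectorUnitary : Matrix A A ℂ) *
      Matrix.diagonal (fun i => ((Real.log (h.eigenvalues i) : ℝ) : ℂ)) *
      (star (h.eigenvectorUnitary : Matrix A A ℂ))
  else 0

/-- A quantum state: a positive semidefinite matrix with unit trace. -/
structure MState (A : Type*) [Fintype A] [DecidableEq A] where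
  mat : Matrix A A ℂ
  posSemidef : mat.PosSemidef
  trace_one : mat.trace = 1

/-- `Q_α(ρ‖σ) = Tr[ρ^α σ^(1-α)]`. -/
noncomputable def QRenyi {A : Type*} [Fintype A] [DecidableEq A] (α : ℝ)
    (ρ σ : Matrix A A ℂ) : ℝ :=
  ((mpow ρ α * mpow σ (1 - α)).trace).re

/-- Petz Rényi divergence `D_α(ρ‖σ)`, valued in `(-∞,∞]`. -/
noncomputable def DRenyi {A : Type*} [Fintype A] [DecidableEq A] (α : ℝ)
    (ρ σ : Matrix A A ℂ) : EReal :=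
  if QRenyi α ρ σ = 0 then ⊤ else (((α - 1)⁻¹ * Real.log (QRenyi α ρ σ) : ℝ) : EReal)

-- Quantum relative entropy `D(ρ‖σ)`, valued in `(-∞,∞]`.
open Classical in
noncomputable def relEnt {A : Type*} [Fintype A] [DecidableEq A] (ρ σ : Matrix A A ℂ) : EReal :=
  if LinearMap.ker (Matrix.toLin' σ) ≤ LinearMap.ker (Matrix.toLin' ρ) then
    (((ρ * (mlog ρ - mlog σ)).trace).re : EReal)
  else ⊤

/-- Doubly minimized Petz Rényi lautum information. -/
noncomputable def Ldd {A B : Type*} [Fintype A] [DecidableEq A] [Fintype B] [DecidableEq B]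
    (α : ℝ) (ρ : Matrix (A × B) (A × B) ℂ) : EReal :=
  ⨅ (σ : MState A) (τ : MState B), DRenyi α (σ.mat ⊗ₖ τ.mat) ρ

/-- Tumula information. -/
noncomputable def Tum {A B : Type*} [Fintype A] [DecidableEq A] [Fintype B] [DecidableEq B]
    (ρ : Matrix (A × B) (A × B) ℂ) : EReal :=
  ⨅ (σ : MState A) (τ : MState B), relEnt (σ.mat ⊗ₖ τ.mat) ρ

/-- Partial trace over the first factor. -/
noncomputable def ptrA {A B : Type*} [Fintype A] (M : Matrix (A × B) (A × B) ℂ) :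
    Matrix B B ℂ :=
  Matrix.of fun b b' => ∑ a, M (a, b) (a, b')

/-- Partial trace over the second factor. -/
noncomputable def ptrB {A B : Type*} [Fintype B] (M : Matrix (A × B) (A × B) ℂ) :
    Matrix A A ℂ :=
  Matrix.of fun a a' => ∑ b, M (a, b) (a', b)


namespace SibsonAux
open Matrix

noncomputable def fpow (x p : ℝ) : ℝ := if x = 0 then 0 else x ^ p

lemma fpow_nonneg {x : ℝ} (hx : 0 ≤ x) (p : ℝ) : 0 ≤ fpow x p := by
  unfold fpow; split
  · exact le_refl 0
  · exact Real.rpow_nonneg hx p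

lemma fpow_pos {x : ℝ} (hx : 0 < x) (p : ℝ) : 0 < fpow x p := by
  unfold fpow; rw [if_neg hx.ne']; exact Real.rpow_pos_of_pos hx p

lemma fpow_one (x : ℝ) : fpow x 1 = x := by
  unfold fpow; split
  · simp [*]
  · exact Real.rpow_one x

lemma fpow_add {x : ℝ} (hx : 0 ≤ x) (p q : ℝ) : fpow x (p + q) = fpow x p * fpow x q := by
  rcases eq_or_lt_of_le hx with h | h
  · simp [fpow, ← h]
  · unfold fpow
    rw [if_neg h.ne', if_neg h.ne', if_neg h.ne', Real.rpow_add h]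

lemma fpow_fpow {x : ℝ} (hx : 0 ≤ x) (p q : ℝ) : fpow (fpow x p) q = fpow x (p * q) := by
  rcases eq_or_lt_of_le hx with h | h
  · simp [fpow, ← h]
  · unfold fpow
    rw [if_neg h.ne', if_neg h.ne', if_neg (Real.rpow_pos_of_pos h p).ne',
      ← Real.rpow_mul h.le]

lemma fpow_mul {x y : ℝ} (hx : 0 ≤ x) (hy : 0 ≤ y) (p : ℝ) :
    fpow (x * y) p = fpow x p * fpow y p := by
  rcases eq_or_lt_of_le hx with h | h
  · simp [fpow, ← h]
  rcases eq_or_lt_of_le hy with h' | h'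
  · simp [fpow, ← h']
  unfold fpow
  rw [if_neg h.ne', if_neg h'.ne', if_neg (by positivity), Real.mul_rpow h.le h'.le]

lemma fpow_smul {r x : ℝ} (hr : 0 < r) (hx : 0 ≤ x) (p : ℝ) :
    fpow (r * x) p = r ^ p * fpow x p := by
  rw [fpow_mul hr.le hx, fpow, if_neg hr.ne']


variable {n : Type*} [Fintype n] [DecidableEq n]

lemma mpow_spec {X : Matrix n n ℂ} (hH : X.IsHermitian) (p : ℝ) :
    mpow X p = (hH.eigenvectorUnitary : Matrix n n ℂ) *
      Matrix.diagonal (fun i => ((fpow (hH.eigenvalues i) p : ℝ) : ℂ)) *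
      (star (hH.eigenvectorUnitary : Matrix n n ℂ)) := by
  rw [mpow, dif_pos hH]; rfl

/-- Conjugating congruence: applying a real function to the diagonal is independent of the
unitary diagonalization chosen. -/
lemma conj_diag_congr (f : ℝ → ℝ) {V W : Matrix n n ℂ}
    (hV : V * star V = 1) (hV' : star V * V = 1)
    (hW : W * star W = 1) (hW' : star W * W = 1) (d e : n → ℝ)
    (h : V * Matrix.diagonal (fun i => ((d i : ℝ) : ℂ)) * star V
        = W * Matrix.diagonal (fun i => ((e i : ℝ) : ℂ)) * star W) :
    V * Matrix.diagonal (fun i => ((f (d i) : ℝ) : ℂ)) * star V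
        = W * Matrix.diagonal (fun i => ((f (e i) : ℝ) : ℂ)) * star W := by
  set M : Matrix n n ℂ := star V * W with hM
  have hcomm : Matrix.diagonal (fun i => ((d i : ℝ) : ℂ)) * M
      = M * Matrix.diagonal (fun i => ((e i : ℝ) : ℂ)) := by
    have e1 : star V * (V * Matrix.diagonal (fun i => ((d i : ℝ) : ℂ)) * star V) * W
        = Matrix.diagonal (fun i => ((d i : ℝ) : ℂ)) * M := by
      calc star V * (V * Matrix.diagonal (fun i => ((d i : ℝ) : ℂ)) * star V) * W
          = (star V * V) * Matrix.diagonal (fun i => ((d i : ℝ) : ℂ)) * (star V * W) := by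
            simp only [mul_assoc]
        _ = _ := by rw [hV', one_mul, hM]
    have e2 : star V * (W * Matrix.diagonal (fun i => ((e i : ℝ) : ℂ)) * star W) * W
        = M * Matrix.diagonal (fun i => ((e i : ℝ) : ℂ)) := by
      calc star V * (W * Matrix.diagonal (fun i => ((e i : ℝ) : ℂ)) * star W) * W
          = (star V * W) * Matrix.diagonal (fun i => ((e i : ℝ) : ℂ)) * (star W * W) := by
            simp only [mul_assoc]
        _ = _ := by rw [hW', mul_one, hM]
    rw [← e1, h, e2]
  have key : ∀ i j, ((d i : ℝ) : ℂ) * M i j = M i j * ((e j : ℝ) : ℂ) := by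
    intro i j
    have h' := congrFun (congrFun hcomm i) j
    simpa [Matrix.diagonal_mul, Matrix.mul_diagonal] using h'
  have key2 : Matrix.diagonal (fun i => ((f (d i) : ℝ) : ℂ)) * M
      = M * Matrix.diagonal (fun i => ((f (e i) : ℝ) : ℂ)) := by
    ext i j
    rw [Matrix.diagonal_mul, Matrix.mul_diagonal]
    rcases eq_or_ne (M i j) 0 with h0 | h0
    · simp [h0]
    · have hc : ((d i : ℝ) : ℂ) = ((e j : ℝ) : ℂ) := by
        have hk := key i j
        rw [mul_comm (M i j) _] at hk
        exact mul_right_cancel₀ h0 hk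
      have hr : d i = e j := by exact_mod_cast hc
      rw [hr, mul_comm]
  have hstarV : star V = M * star W := by
    rw [hM, mul_assoc, hW, mul_one]
  calc V * Matrix.diagonal (fun i => ((f (d i) : ℝ) : ℂ)) * star V
      = V * (Matrix.diagonal (fun i => ((f (d i) : ℝ) : ℂ)) * M) * star W := by
        rw [hstarV]; simp only [mul_assoc]
    _ = V * (M * Matrix.diagonal (fun i => ((f (e i) : ℝ) : ℂ))) * star W := by rw [key2]
    _ = (V * star V) * (W * Matrix.diagonal (fun i => ((f (e i) : ℝ) : ℂ)) * star W) := by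
        rw [hM]; simp only [mul_assoc]
    _ = _ := by rw [hV, one_mul]

lemma mpow_decomp {X U : Matrix n n ℂ} (hU : U * star U = 1) (hU' : star U * U = 1)
    (d : n → ℝ)
    (hX : X = U * Matrix.diagonal (fun i => ((d i : ℝ) : ℂ)) * star U) (p : ℝ) :
    mpow X p = U * Matrix.diagonal (fun i => ((fpow (d i) p : ℝ) : ℂ)) * star U := by
  have hd : star (fun i => ((d i : ℝ) : ℂ)) = fun i => ((d i : ℝ) : ℂ) := by
    funext i; simp
  have hH : X.IsHermitian := by
    rw [hX]
    unfold Matrix.IsHermitian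
    simp only [Matrix.star_eq_conjTranspose, Matrix.conjTranspose_mul,
      Matrix.conjTranspose_conjTranspose, Matrix.diagonal_conjTranspose, hd, Matrix.mul_assoc]
  have h1 : (hH.eigenvectorUnitary : Matrix n n ℂ) * star (hH.eigenvectorUnitary : Matrix n n ℂ)
      = 1 := (Matrix.mem_unitaryGroup_iff).mp hH.eigenvectorUnitary.2
  have h2 : star (hH.eigenvectorUnitary : Matrix n n ℂ) * (hH.eigenvectorUnitary : Matrix n n ℂ)
      = 1 := (Matrix.mem_unitaryGroup_iff').mp hH.eigenvectorUnitary.2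
  rw [mpow_spec hH p]
  exact conj_diag_congr (fun x => fpow x p) h1 h2 hU hU' _ _ (hH.spectral_theorem.symm.trans hX)


lemma unitary_mul_star {X : Matrix n n ℂ} (hH : X.IsHermitian) :
    (hH.eigenvectorUnitary : Matrix n n ℂ) * star (hH.eigenvectorUnitary : Matrix n n ℂ) = 1 :=
  (Matrix.mem_unitaryGroup_iff).mp hH.eigenvectorUnitary.2

lemma star_mul_unitary {X : Matrix n n ℂ} (hH : X.IsHermitian) :
    star (hH.eigenvectorUnitary : Matrix n n ℂ) * (hH.eigenvectorUnitary : Matrix n n ℂ) = 1 :=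
  (Matrix.mem_unitaryGroup_iff').mp hH.eigenvectorUnitary.2

lemma mpow_psd {X : Matrix n n ℂ} (hX : X.PosSemidef) (p : ℝ) : (mpow X p).PosSemidef := by
  rw [mpow_spec hX.1 p]
  have hdiag : (Matrix.diagonal
      (fun i => ((fpow (hX.1.eigenvalues i) p : ℝ) : ℂ))).PosSemidef := by
    refine Matrix.posSemidef_diagonal_iff.mpr fun i => ?_
    have := fpow_nonneg (hX.eigenvalues_nonneg i) p
    exact_mod_cast Complex.zero_le_real.mpr this
  have := hdiag.mul_mul_conjTranspose_same (hX.1.eigenvectorUnitary : Matrix n n ℂ)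
  rwa [← Matrix.star_eq_conjTranspose] at this

lemma mpow_hermitian {X : Matrix n n ℂ} (hX : X.PosSemidef) (p : ℝ) :
    (mpow X p).IsHermitian := (mpow_psd hX p).1

lemma mpow_trace {X : Matrix n n ℂ} (hH : X.IsHermitian) (p : ℝ) :
    (mpow X p).trace = ((∑ i, fpow (hH.eigenvalues i) p : ℝ) : ℂ) := by
  rw [mpow_spec hH p, Matrix.trace_mul_cycle, star_mul_unitary hH, one_mul,
    Matrix.trace_diagonal]
  push_cast
  rfl

lemma mpow_one' {X : Matrix n n ℂ} (hH : X.IsHermitian) : mpow X 1 = X := by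
  rw [mpow_spec hH 1]
  have : (fun i => ((fpow (hH.eigenvalues i) 1 : ℝ) : ℂ))
      = fun i => ((hH.eigenvalues i : ℝ) : ℂ) := by
    funext i; rw [fpow_one]
  rw [this]
  exact hH.spectral_theorem.symm

lemma mpow_mul_mpow {X : Matrix n n ℂ} (hX : X.PosSemidef) (p q : ℝ) :
    mpow X p * mpow X q = mpow X (p + q) := by
  rw [mpow_spec hX.1 p, mpow_spec hX.1 q, mpow_spec hX.1 (p + q)]
  set U : Matrix n n ℂ := (hX.1.eigenvectorUnitary : Matrix n n ℂ) with hU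
  have h2 : star U * U = 1 := star_mul_unitary hX.1
  calc (U * Matrix.diagonal (fun i => ((fpow (hX.1.eigenvalues i) p : ℝ) : ℂ)) * star U) *
        (U * Matrix.diagonal (fun i => ((fpow (hX.1.eigenvalues i) q : ℝ) : ℂ)) * star U)
      = U * (Matrix.diagonal (fun i => ((fpow (hX.1.eigenvalues i) p : ℝ) : ℂ)) * ((star U * U) *
          Matrix.diagonal (fun i => ((fpow (hX.1.eigenvalues i) q : ℝ) : ℂ)))) * star U := by
        simp only [mul_assoc]
    _ = U * Matrix.diagonal (fun i => ((fpow (hX.1.eigenvalues i) (p + q) : ℝ) : ℂ)) * star U := by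
        rw [h2, one_mul, Matrix.diagonal_mul_diagonal]
        have hfun : (fun i => ((fpow (hX.1.eigenvalues i) p : ℝ) : ℂ) *
            ((fpow (hX.1.eigenvalues i) q : ℝ) : ℂ))
            = fun i => ((fpow (hX.1.eigenvalues i) (p + q) : ℝ) : ℂ) := by
          funext i
          rw [← Complex.ofReal_mul, ← fpow_add (hX.eigenvalues_nonneg i)]
        rw [hfun]

lemma mpow_mpow {X : Matrix n n ℂ} (hX : X.PosSemidef) (p q : ℝ) :
    mpow (mpow X p) q = mpow X (p * q) := by
  have h1 := unitary_mul_star hX.1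
  have h2 := star_mul_unitary hX.1
  have hdec := mpow_decomp h1 h2 (fun i => fpow (hX.1.eigenvalues i) p)
    (mpow_spec hX.1 p) q
  rw [hdec, mpow_spec hX.1 (p * q)]
  have hfun : (fun i => ((fpow (fpow (hX.1.eigenvalues i) p) q : ℝ) : ℂ))
      = fun i => ((fpow (hX.1.eigenvalues i) (p * q) : ℝ) : ℂ) := by
    funext i
    rw [fpow_fpow (hX.eigenvalues_nonneg i)]
  rw [hfun]

lemma mpow_smul {X : Matrix n n ℂ} (hX : X.PosSemidef) {r : ℝ} (hr : 0 < r) (p : ℝ) :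
    mpow (((r : ℝ) : ℂ) • X) p = ((r ^ p : ℝ) : ℂ) • mpow X p := by
  have h1 := unitary_mul_star hX.1
  have h2 := star_mul_unitary hX.1
  set U : Matrix n n ℂ := (hX.1.eigenvectorUnitary : Matrix n n ℂ) with hU
  have hXd : ((r : ℝ) : ℂ) • X
      = U * Matrix.diagonal (fun i => ((r * hX.1.eigenvalues i : ℝ) : ℂ)) * star U := by
    have hfun : (fun i => ((r * hX.1.eigenvalues i : ℝ) : ℂ))
        = ((r : ℝ) : ℂ) • (RCLike.ofReal ∘ hX.1.eigenvalues) := by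
      funext i
      simp [Complex.ofReal_mul]
    rw [hfun, Matrix.diagonal_smul, mul_smul_comm, smul_mul_assoc]
    congr 1
    exact hX.1.spectral_theorem
  rw [mpow_decomp h1 h2 _ hXd p, mpow_spec hX.1 p]
  have hfun2 : (fun i => ((fpow (r * hX.1.eigenvalues i) p : ℝ) : ℂ))
      = ((r ^ p : ℝ) : ℂ) • (fun i => ((fpow (hX.1.eigenvalues i) p : ℝ) : ℂ)) := by
    funext i
    simp only [Pi.smul_apply, smul_eq_mul, ← Complex.ofReal_mul]
    rw [fpow_smul hr (hX.eigenvalues_nonneg i)]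
  rw [hfun2, Matrix.diagonal_smul, mul_smul_comm, smul_mul_assoc]


variable {m : Type*} [Fintype m] [DecidableEq m]

omit [Fintype n] [DecidableEq n] [Fintype m] [DecidableEq m] in
lemma kron_star (A : Matrix n n ℂ) (B : Matrix m m ℂ) :
    star (A ⊗ₖ B) = star A ⊗ₖ star B := by
  ext i j
  simp [Matrix.star_eq_conjTranspose, Matrix.conjTranspose_apply, Matrix.kroneckerMap_apply,
    mul_comm]

lemma mpow_kron {X : Matrix n n ℂ} {Y : Matrix m m ℂ} (hX : X.PosSemidef) (hY : Y.PosSemidef)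
    (p : ℝ) : mpow (X ⊗ₖ Y) p = mpow X p ⊗ₖ mpow Y p := by
  set U : Matrix n n ℂ := (hX.1.eigenvectorUnitary : Matrix n n ℂ) with hU
  set V : Matrix m m ℂ := (hY.1.eigenvectorUnitary : Matrix m m ℂ) with hV
  have hU1 : U * star U = 1 := unitary_mul_star hX.1
  have hU2 : star U * U = 1 := star_mul_unitary hX.1
  have hV1 : V * star V = 1 := unitary_mul_star hY.1
  have hV2 : star V * V = 1 := star_mul_unitary hY.1
  have hUV1 : (U ⊗ₖ V) * star (U ⊗ₖ V) = 1 := by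
    rw [kron_star, ← Matrix.mul_kronecker_mul, hU1, hV1, Matrix.one_kronecker_one]
  have hUV2 : star (U ⊗ₖ V) * (U ⊗ₖ V) = 1 := by
    rw [kron_star, ← Matrix.mul_kronecker_mul, hU2, hV2, Matrix.one_kronecker_one]
  have hdec : X ⊗ₖ Y = (U ⊗ₖ V) *
      Matrix.diagonal (fun i : n × m =>
        ((hX.1.eigenvalues i.1 * hY.1.eigenvalues i.2 : ℝ) : ℂ)) * star (U ⊗ₖ V) := by
    conv_lhs => rw [hX.1.spectral_theorem, hY.1.spectral_theorem, Unitary.conjStarAlgAut_apply,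
      Unitary.conjStarAlgAut_apply]
    rw [kron_star, Matrix.mul_kronecker_mul, Matrix.mul_kronecker_mul,
      Matrix.diagonal_kronecker_diagonal]
    congr 2
    funext i
    simp [Complex.ofReal_mul]
  rw [mpow_decomp hUV1 hUV2 _ hdec p, mpow_spec hX.1 p, mpow_spec hY.1 p]
  rw [kron_star, Matrix.mul_kronecker_mul, Matrix.mul_kronecker_mul,
    Matrix.diagonal_kronecker_diagonal]
  have hfun : (fun i : n × m =>
      ((fpow (hX.1.eigenvalues i.1 * hY.1.eigenvalues i.2) p : ℝ) : ℂ))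
      = fun i : n × m => ((fpow (hX.1.eigenvalues i.1) p : ℝ) : ℂ) *
          ((fpow (hY.1.eigenvalues i.2) p : ℝ) : ℂ) := by
    funext i
    rw [← Complex.ofReal_mul, fpow_mul (hX.eigenvalues_nonneg i.1) (hY.eigenvalues_nonneg i.2)]
  rw [hfun]

end SibsonAux

namespace SibsonAux
open Matrix

variable {A B : Type*} [Fintype A] [DecidableEq A] [Fintype B] [DecidableEq B]

lemma ptrA_hermitian {M : Matrix (A × B) (A × B) ℂ} (hM : M.IsHermitian) :
    (ptrA M).IsHermitian := by
  unfold Matrix.IsHermitian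
  ext b b'
  simp only [Matrix.conjTranspose_apply, ptrA, Matrix.of_apply, star_sum]
  refine Finset.sum_congr rfl fun a _ => ?_
  exact congrFun (congrFun hM (a, b)) (a, b')

private lemma sum3_comm {α β γ M : Type*} [AddCommMonoid M] [Fintype α] [Fintype β] [Fintype γ]
    (f : α → β → γ → M) :
    ∑ a, ∑ b, ∑ c, f a b c = ∑ b, ∑ c, ∑ a, f a b c :=
  calc ∑ a, ∑ b, ∑ c, f a b c
      = ∑ b, ∑ a, ∑ c, f a b c := Finset.sum_comm
    _ = ∑ b, ∑ c, ∑ a, f a b c := Finset.sum_congr rfl fun _ _ => Finset.sum_comm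

private lemma sum4_comm {α β γ δ M : Type*} [AddCommMonoid M] [Fintype α] [Fintype β] [Fintype γ]
    [Fintype δ] (f : α → β → γ → δ → M) :
    ∑ a, ∑ b, ∑ c, ∑ d, f a b c d = ∑ b, ∑ d, ∑ a, ∑ c, f a b c d :=
  calc ∑ a, ∑ b, ∑ c, ∑ d, f a b c d
      = ∑ b, ∑ a, ∑ c, ∑ d, f a b c d := Finset.sum_comm
    _ = ∑ b, ∑ a, ∑ d, ∑ c, f a b c d := Finset.sum_congr rfl fun _ _ =>
          Finset.sum_congr rfl fun _ _ => Finset.sum_comm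
    _ = ∑ b, ∑ d, ∑ a, ∑ c, f a b c d := Finset.sum_congr rfl fun _ _ => Finset.sum_comm

lemma ptrA_posSemidef {M : Matrix (A × B) (A × B) ℂ} (hM : M.PosSemidef) :
    (ptrA M).PosSemidef := by
  refine Matrix.PosSemidef.of_dotProduct_mulVec_nonneg (ptrA_hermitian hM.1) fun v => ?_
  have key : star v ⬝ᵥ (ptrA M *ᵥ v)
      = ∑ a : A, star (fun q : A × B => if q.1 = a then v q.2 else 0) ⬝ᵥ
          (M *ᵥ fun q : A × B => if q.1 = a then v q.2 else 0) := by
    have h1 : star v ⬝ᵥ (ptrA M *ᵥ v)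
        = ∑ b : B, ∑ b' : B, ∑ a : A, star (v b) * (M (a, b) (a, b') * v b') := by
      simp only [dotProduct, Matrix.mulVec, ptrA, Matrix.of_apply, Pi.star_apply,
        Finset.sum_mul, Finset.mul_sum]
    have h2 : ∀ a : A, star (fun q : A × B => if q.1 = a then v q.2 else 0) ⬝ᵥ
        (M *ᵥ fun q : A × B => if q.1 = a then v q.2 else 0)
        = ∑ b : B, ∑ b' : B, star (v b) * (M (a, b) (a, b') * v b') := by
      intro a
      simp [dotProduct, Matrix.mulVec, Fintype.sum_prod_type, apply_ite, mul_ite,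
        ite_mul, Finset.mul_sum]
    rw [h1, ← sum3_comm (fun a b b' => star (v b) * (M (a, b) (a, b') * v b'))]
    exact Finset.sum_congr rfl fun a _ => (h2 a).symm
  rw [key]
  exact Finset.sum_nonneg fun a _ => hM.dotProduct_mulVec_nonneg _

lemma ptrA_comm (P : Matrix A A ℂ) (R : Matrix (A × B) (A × B) ℂ) :
    ptrA ((P ⊗ₖ (1 : Matrix B B ℂ)) * R) = ptrA (R * (P ⊗ₖ (1 : Matrix B B ℂ))) := by
  ext b b'
  simp only [ptrA, Matrix.of_apply, Matrix.mul_apply, Matrix.kroneckerMap_apply,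
    Fintype.sum_prod_type, Matrix.one_apply, mul_ite, mul_zero, ite_mul, zero_mul,
    mul_one, one_mul, Finset.sum_ite_eq, Finset.sum_ite_eq', Finset.mem_univ, if_true]
  rw [Finset.sum_comm (f := fun x x_1 => R (x, b) (x_1, b') * P x_1 x)]
  exact Finset.sum_congr rfl fun i _ => Finset.sum_congr rfl fun j _ => (mul_comm _ _)

lemma trace_kron_mul (S : Matrix A A ℂ) (X : Matrix B B ℂ) (R : Matrix (A × B) (A × B) ℂ) :
    ((S ⊗ₖ X) * R).trace = (X * ptrA ((S ⊗ₖ (1 : Matrix B B ℂ)) * R)).trace := by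
  simp only [Matrix.trace, Matrix.diag_apply, Matrix.mul_apply, Matrix.kroneckerMap_apply,
    ptrA, Matrix.of_apply, Fintype.sum_prod_type, Matrix.one_apply, mul_ite, mul_zero,
    ite_mul, zero_mul, mul_one, one_mul, Finset.sum_ite_eq, Finset.sum_ite_eq',
    Finset.mem_univ, if_true, Finset.mul_sum, Finset.sum_mul]
  rw [sum4_comm (fun (a : A) (b : B) (a' : A) (b' : B) =>
    S a a' * X b b' * R (a', b') (a, b))]
  refine Finset.sum_congr rfl fun b _ => Finset.sum_congr rfl fun b' _ =>
    Finset.sum_congr rfl fun a _ => Finset.sum_congr rfl fun a' _ => ?_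
  ring

lemma psd_smul {n : Type*} [Fintype n] [DecidableEq n] {X : Matrix n n ℂ} (hX : X.PosSemidef)
    {r : ℝ} (hr : 0 ≤ r) : (((r : ℝ) : ℂ) • X).PosSemidef := by
  refine Matrix.PosSemidef.of_dotProduct_mulVec_nonneg ?_ ?_
  · unfold Matrix.IsHermitian
    rw [Matrix.conjTranspose_smul, hX.1.eq]
    congr 1
    simp
  · intro x
    rw [Matrix.smul_mulVec, dotProduct_smul, smul_eq_mul]
    exact mul_nonneg (by exact_mod_cast Complex.zero_le_real.mpr hr) (hX.dotProduct_mulVec_nonneg x)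

end SibsonAux

set_option maxHeartbeats 1000000 in
/-- Quantum Sibson identity for the Petz Rényi divergence. -/
theorem sibson_identity {A B : Type*} [Fintype A] [DecidableEq A] [Nonempty A]
    [Fintype B] [DecidableEq B] [Nonempty B]
    (α : ℝ) (hα : α ∈ Set.Ioo (0 : ℝ) 1)
    (ρ : MState (A × B)) (σ : MState A)
    (N : Matrix B B ℂ)
    (hN : N = ptrA ((mpow σ.mat α ⊗ₖ (1 : Matrix B B ℂ)) * mpow ρ.mat (1 - α)))
    (hNtr : N.trace ≠ 0)
    (τhat : Matrix B B ℂ)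
    (hτhat : τhat = ((mpow N (1 / (1 - α))).trace)⁻¹ • mpow N (1 / (1 - α))) :
    τhat.PosSemidef ∧ τhat.trace = 1 ∧
      ∀ τ : MState B,
        (QRenyi α (σ.mat ⊗ₖ τ.mat) ρ.mat =
            QRenyi α (σ.mat ⊗ₖ τhat) ρ.mat * QRenyi α τ.mat τhat) ∧
        (DRenyi α (σ.mat ⊗ₖ τ.mat) ρ.mat =
            DRenyi α (σ.mat ⊗ₖ τhat) ρ.mat + DRenyi α τ.mat τhat) ∧
        (DRenyi α (σ.mat ⊗ₖ τ.mat) ρ.mat = ⊤ ↔ QRenyi α τ.mat τhat = 0) := by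
  obtain ⟨hα0, hα1⟩ := hα
  have hβ0 : (0:ℝ) < 1 - α := by linarith
  have hβne : (1:ℝ) - α ≠ 0 := hβ0.ne'
  have hRρ : (mpow ρ.mat (1 - α)).PosSemidef := SibsonAux.mpow_psd ρ.posSemidef _
  have hPσ : (mpow σ.mat (α/2)).PosSemidef := SibsonAux.mpow_psd σ.posSemidef _
  -- `N` is positive semidefinite
  have hNpsd : N.PosSemidef := by
    have hsplit : mpow σ.mat α ⊗ₖ (1 : Matrix B B ℂ)
        = (mpow σ.mat (α/2) ⊗ₖ (1 : Matrix B B ℂ)) *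
          (mpow σ.mat (α/2) ⊗ₖ (1 : Matrix B B ℂ)) := by
      rw [← Matrix.mul_kronecker_mul, SibsonAux.mpow_mul_mpow σ.posSemidef, one_mul]
      norm_num
    rw [hN, hsplit, mul_assoc, SibsonAux.ptrA_comm]
    have hCH : Matrix.conjTranspose (mpow σ.mat (α/2) ⊗ₖ (1 : Matrix B B ℂ))
        = mpow σ.mat (α/2) ⊗ₖ (1 : Matrix B B ℂ) := by
      rw [← Matrix.star_eq_conjTranspose, SibsonAux.kron_star, star_one,
        Matrix.star_eq_conjTranspose, hPσ.1.eq]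
    have h := hRρ.mul_mul_conjTranspose_same (mpow σ.mat (α/2) ⊗ₖ (1 : Matrix B B ℂ))
    rw [hCH] at h
    exact SibsonAux.ptrA_posSemidef h
  -- the positive number `t = Tr[N^(1/(1-α))]`
  set t : ℝ := ∑ i, SibsonAux.fpow (hNpsd.1.eigenvalues i) (1/(1-α)) with ht_def
  have htrK : (mpow N (1/(1-α))).trace = ((t : ℝ) : ℂ) := SibsonAux.mpow_trace hNpsd.1 _
  have htrN : N.trace = ((∑ i, hNpsd.1.eigenvalues i : ℝ) : ℂ) := by
    rw [show N.trace = (mpow N 1).trace from by rw [SibsonAux.mpow_one' hNpsd.1],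
      SibsonAux.mpow_trace hNpsd.1 1]
    norm_num [SibsonAux.fpow_one]
  have hsum_ne : (∑ i, hNpsd.1.eigenvalues i) ≠ 0 := by
    intro h
    exact hNtr (by rw [htrN, h, Complex.ofReal_zero])
  have hex : ∃ i, 0 < hNpsd.1.eigenvalues i := by
    by_contra h
    push_neg at h
    exact hsum_ne (Finset.sum_eq_zero fun i _ =>
      le_antisymm (h i) (hNpsd.eigenvalues_nonneg i))
  have ht : 0 < t := by
    obtain ⟨i0, hi0⟩ := hex
    refine Finset.sum_pos' (fun i _ => SibsonAux.fpow_nonneg (hNpsd.eigenvalues_nonneg i) _) ?_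
    exact ⟨i0, Finset.mem_univ _, SibsonAux.fpow_pos hi0 _⟩
  have hτ : τhat = ((t⁻¹ : ℝ) : ℂ) • mpow N (1/(1-α)) := by
    rw [hτhat, htrK, Complex.ofReal_inv]
  have hKpsd : (mpow N (1/(1-α))).PosSemidef := SibsonAux.mpow_psd hNpsd _
  -- τhat is a state
  have hτpsd : τhat.PosSemidef := by
    rw [hτ]
    exact SibsonAux.psd_smul hKpsd (inv_nonneg.mpr ht.le)
  have hτtr : τhat.trace = 1 := by
    rw [hτ, Matrix.trace_smul, htrK, smul_eq_mul, ← Complex.ofReal_mul,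
      inv_mul_cancel₀ ht.ne', Complex.ofReal_one]
  -- generic reduction of Q to a trace against N
  have hQred : ∀ (τm : Matrix B B ℂ), τm.PosSemidef →
      QRenyi α (σ.mat ⊗ₖ τm) ρ.mat = ((mpow τm α) * N).trace.re := by
    intro τm hτm
    unfold QRenyi
    rw [SibsonAux.mpow_kron σ.posSemidef hτm, SibsonAux.trace_kron_mul, ← hN]
  -- powers of τhat
  have hinv_pos : 0 < t⁻¹ := inv_pos.mpr ht
  have hτβ : mpow τhat (1-α) = ((t⁻¹ ^ (1-α) : ℝ) : ℂ) • N := by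
    rw [hτ, SibsonAux.mpow_smul hKpsd hinv_pos, SibsonAux.mpow_mpow hNpsd,
      show (1/(1-α)) * (1-α) = 1 by field_simp, SibsonAux.mpow_one' hNpsd.1]
  have hτα : mpow τhat α = ((t⁻¹ ^ α : ℝ) : ℂ) • mpow N ((1/(1-α)) * α) := by
    rw [hτ, SibsonAux.mpow_smul hKpsd hinv_pos, SibsonAux.mpow_mpow hNpsd]
  have hKeq : mpow N ((1/(1-α)) * α) * N = mpow N (1/(1-α)) := by
    calc mpow N ((1/(1-α)) * α) * N
        = mpow N ((1/(1-α)) * α) * mpow N 1 := by rw [SibsonAux.mpow_one' hNpsd.1]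
      _ = mpow N ((1/(1-α)) * α + 1) := SibsonAux.mpow_mul_mpow hNpsd _ _
      _ = mpow N (1/(1-α)) := by
          rw [show (1/(1-α)) * α + 1 = 1/(1-α) by field_simp; ring]
  -- value of Q for τhat
  have hQhat : QRenyi α (σ.mat ⊗ₖ τhat) ρ.mat = t ^ (1-α) := by
    rw [hQred τhat hτpsd, hτα, smul_mul_assoc, hKeq, Matrix.trace_smul, htrK, smul_eq_mul,
      ← Complex.ofReal_mul, Complex.ofReal_re]
    rw [Real.inv_rpow ht.le, ← Real.rpow_neg ht.le]
    nth_rewrite 2 [show t = t ^ (1:ℝ) from (Real.rpow_one t).symm]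
    rw [← Real.rpow_add ht]
    ring_nf
  have hQτ : ∀ τm : Matrix B B ℂ,
      QRenyi α τm τhat = t⁻¹ ^ (1-α) * ((mpow τm α) * N).trace.re := by
    intro τm
    unfold QRenyi
    rw [hτβ, mul_smul_comm, Matrix.trace_smul, smul_eq_mul, Complex.re_ofReal_mul]
  have hpow_mul : t ^ (1-α) * t⁻¹ ^ (1-α) = 1 := by
    rw [← Real.mul_rpow ht.le (inv_nonneg.mpr ht.le), mul_inv_cancel₀ ht.ne',
      Real.one_rpow]
  have hQhat_ne : t ^ (1-α) ≠ 0 := (Real.rpow_pos_of_pos ht _).ne'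
  refine ⟨hτpsd, hτtr, fun τ => ?_⟩
  have hQ1 : QRenyi α (σ.mat ⊗ₖ τ.mat) ρ.mat
      = QRenyi α (σ.mat ⊗ₖ τhat) ρ.mat * QRenyi α τ.mat τhat := by
    rw [hQred τ.mat τ.posSemidef, hQhat, hQτ τ.mat, ← mul_assoc, hpow_mul, one_mul]
  refine ⟨hQ1, ?_, ?_⟩
  · -- additivity of D
    by_cases h2 : QRenyi α τ.mat τhat = 0
    · have hz : QRenyi α (σ.mat ⊗ₖ τ.mat) ρ.mat = 0 := by rw [hQ1, h2, mul_zero]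
      unfold DRenyi
      rw [if_pos hz, if_pos h2, if_neg (by rw [hQhat]; exact hQhat_ne)]
      exact (EReal.coe_add_top _).symm
    · have hnz : QRenyi α (σ.mat ⊗ₖ τ.mat) ρ.mat ≠ 0 := by
        rw [hQ1, hQhat]
        exact mul_ne_zero hQhat_ne h2
      unfold DRenyi
      rw [if_neg hnz, if_neg (by rw [hQhat]; exact hQhat_ne), if_neg h2]
      rw [← EReal.coe_add]
      congr 1
      rw [hQ1, Real.log_mul (by rw [hQhat]; exact hQhat_ne) h2]
      ring
  · -- top characterization
    have hiff : QRenyi α (σ.mat ⊗ₖ τ.mat) ρ.mat = 0 ↔ QRenyi α τ.mat τhat = 0 := by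
      rw [hQ1, hQhat]
      constructor
      · intro h
        rcases mul_eq_zero.mp h with h | h
        · exact absurd h hQhat_ne
        · exact h
      · intro h
        rw [h, mul_zero]
    unfold DRenyi
    by_cases hz : QRenyi α (σ.mat ⊗ₖ τ.mat) ρ.mat = 0
    · rw [if_pos hz]
      simpa using hiff.mp hz
    · rw [if_neg hz]
      constructor
      · intro h
        exact absurd h (EReal.coe_ne_top _)
      · intro h
        exact absurd (hiff.mpr h) hz

end
end

section
/- Partial minimizer for the doubly minimized Petz Rényi lautum information (Theorem 1(g)): Let A and B be nonempty finite types, α ∈ (0,1), ρ_AB a bipartite state on A × B, and σ_A a state on A. Let N be the matrix on B given by N b b' := ∑ a, ((σ_A^α ⊗ 1_B) · ρ_AB^(1−α)) (a,b) (a,b') (the partial trace over A of (σ_A^α ⊗ 1_B) · ρ_AB^(1−α)), and assume Tr N ≠ 0. Define τ̂_B := N^(1/(1−α)) / Tr[N^(1/(1−α))]. Then for every state τ_B on B, D_α(σ_A ⊗ τ̂_B ‖ ρ_AB) ≤ D_α(σ_A ⊗ τ_B ‖ ρ_AB); that is, τ̂_B achieves the infimum of D_α(σ_A ⊗ τ_B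 ‖ ρ_AB) over states τ_B on B. -/
open scoped BigOperators Kronecker ComplexOrder

noncomputable section

set_option linter.unusedSectionVars false
set_option maxHeartbeats 1000000

namespace PMHelper
open Matrix Polynomial

variable {n : Type*} [Fintype n] [DecidableEq n]
variable {A B : Type*} [Fintype A] [DecidableEq A] [Fintype B] [DecidableEq B]

/-- Conjugation by a unitary as an algebra homomorphism. -/
def conjAlgHom (U : Matrix n n ℂ) (hU : U ∈ Matrix.unitaryGroup n ℂ) :
    Matrix n n ℂ →ₐ[ℂ] Matrix n n ℂ where
  toFun M := U * M * star U
  map_one' := by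
    show U * 1 * star U = 1
    rw [mul_one]; exact Matrix.mem_unitaryGroup_iff.mp hU
  map_mul' M N := by
    have h : star U * U = 1 := Matrix.mem_unitaryGroup_iff'.mp hU
    calc U * (M * N) * star U = U * M * (star U * U) * N * star U := by
          rw [h]; noncomm_ring
      _ = U * M * star U * (U * N * star U) := by noncomm_ring
  map_zero' := by simp
  map_add' M N := by noncomm_ring
  commutes' r := by
    simp only [Algebra.algebraMap_eq_smul_one]
    rw [Matrix.mul_smul, mul_one, Matrix.smul_mul, Matrix.mem_unitaryGroup_iff.mp hU]

lemma conjAlgHom_apply (U : Matrix n n ℂ) (hU : U ∈ Matrix.unitaryGroup n ℂ)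
    (M : Matrix n n ℂ) : conjAlgHom U hU M = U * M * star U := rfl

lemma aeval_diagonal (d : n → ℂ) (q : ℂ[X]) :
    aeval (Matrix.diagonal d) q = Matrix.diagonal (fun i => Polynomial.eval (d i) q) := by
  have h1 : aeval (Matrix.diagonalAlgHom ℂ d) q = Matrix.diagonalAlgHom ℂ (aeval d q) :=
    Polynomial.aeval_algHom_apply (Matrix.diagonalAlgHom ℂ) d q
  simp only [Matrix.diagonalAlgHom_apply] at h1
  rw [h1]
  have hfun : aeval d q = fun i => Polynomial.eval (d i) q := by
    funext i
    have h2 : aeval d q i = aeval (d i) q :=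
      (Polynomial.aeval_algHom_apply (Pi.evalAlgHom ℂ (fun _ => ℂ) i) d q).symm
    rw [h2, Polynomial.aeval_def, Polynomial.eval₂_eq_eval_map]
    simp
  rw [hfun]

/-- Well-definedness of the spectral functional calculus. -/
theorem conj_diag_fun_eq {X U V : Matrix n n ℂ}
    (hU : U ∈ Matrix.unitaryGroup n ℂ) (hV : V ∈ Matrix.unitaryGroup n ℂ)
    {d e : n → ℝ}
    (hX : X = U * Matrix.diagonal (fun i => (d i : ℂ)) * star U)
    (hX' : X = V * Matrix.diagonal (fun i => (e i : ℂ)) * star V)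
    (g : ℝ → ℝ) :
    U * Matrix.diagonal (fun i => (g (d i) : ℂ)) * star U
      = V * Matrix.diagonal (fun i => (g (e i) : ℂ)) * star V := by
  classical
  set s : Finset ℂ := (Finset.univ.image fun i => (d i : ℂ)) ∪
    (Finset.univ.image fun i => (e i : ℂ)) with hs
  set G : ℂ → ℂ := fun z => (g z.re : ℂ) with hG
  set q := Lagrange.interpolate s id G with hqdef
  have hq : ∀ z ∈ s, Polynomial.eval z q = G z := by
    intro z hz
    exact Lagrange.eval_interpolate_at_node (v := id) (r := G) (i := z) (Set.injOn_id _) hz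
  have key : ∀ (W : Matrix n n ℂ) (hW : W ∈ Matrix.unitaryGroup n ℂ) (f : n → ℝ),
      (∀ i, (f i : ℂ) ∈ s) →
      aeval (W * Matrix.diagonal (fun i => (f i : ℂ)) * star W) q
        = W * Matrix.diagonal (fun i => (g (f i) : ℂ)) * star W := by
    intro W hW f hf
    have h1 : aeval (conjAlgHom W hW (Matrix.diagonal (fun i => (f i : ℂ)))) q
        = conjAlgHom W hW (aeval (Matrix.diagonal (fun i => (f i : ℂ))) q) :=
      Polynomial.aeval_algHom_apply (conjAlgHom W hW) _ q
    rw [conjAlgHom_apply] at h1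
    rw [h1, aeval_diagonal, conjAlgHom_apply]
    have hfun : (fun i => Polynomial.eval ((f i : ℂ)) q) = fun i => ((g (f i) : ℝ) : ℂ) := by
      funext i
      rw [hq _ (hf i)]
      simp [hG]
    rw [hfun]
  have hd : ∀ i, ((d i : ℂ)) ∈ s := fun i => Finset.mem_union_left _
    (Finset.mem_image_of_mem _ (Finset.mem_univ i))
  have he : ∀ i, ((e i : ℂ)) ∈ s := fun i => Finset.mem_union_right _
    (Finset.mem_image_of_mem _ (Finset.mem_univ i))
  calc U * Matrix.diagonal (fun i => (g (d i) : ℂ)) * star U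
      = aeval X q := by rw [hX, key U hU d hd]
    _ = V * Matrix.diagonal (fun i => (g (e i) : ℂ)) * star V := by rw [hX', key V hV e he]


lemma isHermitian_decomp {U : Matrix n n ℂ} (d : n → ℝ)
    (X : Matrix n n ℂ) (hX : X = U * Matrix.diagonal (fun i => (d i : ℂ)) * star U) :
    X.IsHermitian := by
  rw [hX]
  have hd : (Matrix.diagonal (fun i => (d i : ℂ))).IsHermitian := by
    apply Matrix.isHermitian_diagonal_of_self_adjoint
    show star (fun i => ((d i : ℝ) : ℂ)) = _
    funext i
    show star ((d i : ℝ) : ℂ) = _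
    exact Complex.conj_ofReal _
  rw [Matrix.star_eq_conjTranspose]
  exact Matrix.isHermitian_mul_mul_conjTranspose U hd

lemma posSemidef_decomp {U : Matrix n n ℂ} {d : n → ℝ}
    (hd : ∀ i, 0 ≤ d i)
    (X : Matrix n n ℂ) (hX : X = U * Matrix.diagonal (fun i => (d i : ℂ)) * star U) :
    X.PosSemidef := by
  rw [hX, Matrix.star_eq_conjTranspose]
  apply Matrix.PosSemidef.mul_mul_conjTranspose_same
  rw [Matrix.posSemidef_diagonal_iff]
  intro i
  exact_mod_cast Complex.zero_le_real.mpr (hd i)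

lemma psd_decomp (X : Matrix n n ℂ) (hX : X.PosSemidef) :
    ∃ (U : Matrix n n ℂ) (d : n → ℝ), U ∈ Matrix.unitaryGroup n ℂ ∧ (∀ i, 0 ≤ d i) ∧
      X = U * Matrix.diagonal (fun i => (d i : ℂ)) * star U := by
  refine ⟨hX.1.eigenvectorUnitary, hX.1.eigenvalues, (hX.1.eigenvectorUnitary).2,
    fun i => hX.eigenvalues_nonneg i, ?_⟩
  have := hX.1.spectral_theorem
  convert this using 2
  rfl

/-- `mpow` computed from any unitary diagonalization. -/
lemma mpow_eq_decomp {U : Matrix n n ℂ} {d : n → ℝ}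
    (hU : U ∈ Matrix.unitaryGroup n ℂ)
    {X : Matrix n n ℂ} (hX : X = U * Matrix.diagonal (fun i => (d i : ℂ)) * star U) (p : ℝ) :
    mpow X p = U * Matrix.diagonal
      (fun i => ((if d i = 0 then (0:ℝ) else d i ^ p : ℝ) : ℂ)) * star U := by
  have hherm : X.IsHermitian := isHermitian_decomp d X hX
  rw [mpow, dif_pos hherm]
  have hspec : X = (hherm.eigenvectorUnitary : Matrix n n ℂ) *
      Matrix.diagonal (fun i => ((hherm.eigenvalues i : ℝ) : ℂ)) *
      star (hherm.eigenvectorUnitary : Matrix n n ℂ) := by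
    have := hherm.spectral_theorem
    convert this using 2
    rfl
  exact conj_diag_fun_eq (hherm.eigenvectorUnitary).2 hU hspec hX
    (fun x => if x = 0 then (0:ℝ) else x ^ p)

lemma mpow_eq_rpow {U : Matrix n n ℂ} {d : n → ℝ}
    (hU : U ∈ Matrix.unitaryGroup n ℂ) (hd : ∀ i, 0 ≤ d i)
    {X : Matrix n n ℂ} (hX : X = U * Matrix.diagonal (fun i => (d i : ℂ)) * star U)
    {p : ℝ} (hp : 0 < p) :
    mpow X p = U * Matrix.diagonal (fun i => ((d i ^ p : ℝ) : ℂ)) * star U := by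
  rw [mpow_eq_decomp hU hX p]
  have hfun : (fun i => ((if d i = 0 then (0:ℝ) else d i ^ p : ℝ) : ℂ))
      = fun i => ((d i ^ p : ℝ) : ℂ) := by
    funext i
    by_cases h : d i = 0
    · rw [if_pos h, h, Real.zero_rpow (ne_of_gt hp)]
    · rw [if_neg h]
  rw [hfun]


lemma trace_mul_diagonal (M : Matrix n n ℂ) (v : n → ℂ) :
    (M * Matrix.diagonal v).trace = ∑ i, M i i * v i := by
  simp [Matrix.trace, Matrix.mul_diagonal, Matrix.diag]

lemma trace_conj_diag {U : Matrix n n ℂ} (hU : U ∈ Matrix.unitaryGroup n ℂ) (v : n → ℂ) :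
    (U * Matrix.diagonal v * star U).trace = ∑ i, v i := by
  rw [Matrix.trace_mul_cycle, Matrix.mem_unitaryGroup_iff'.mp hU, one_mul,
    Matrix.trace_diagonal]

lemma star_kron (P : Matrix A A ℂ) (Q : Matrix B B ℂ) :
    star (P ⊗ₖ Q) = star P ⊗ₖ star Q := by
  ext ⟨a, b⟩ ⟨c, e⟩
  simp only [Matrix.star_eq_conjTranspose, Matrix.conjTranspose_apply, Matrix.kroneckerMap_apply]
  rw [star_mul']

lemma kron_unitary {U : Matrix A A ℂ} {V : Matrix B B ℂ}
    (hU : U ∈ Matrix.unitaryGroup A ℂ) (hV : V ∈ Matrix.unitaryGroup B ℂ) :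
    U ⊗ₖ V ∈ Matrix.unitaryGroup (A × B) ℂ := by
  rw [Matrix.mem_unitaryGroup_iff, star_kron, ← Matrix.mul_kronecker_mul,
    Matrix.mem_unitaryGroup_iff.mp hU, Matrix.mem_unitaryGroup_iff.mp hV,
    Matrix.one_kronecker_one]

lemma kron_conj_decomp (U : Matrix A A ℂ) (W : Matrix B B ℂ) (d : A → ℝ) (t : B → ℝ) :
    (U * Matrix.diagonal (fun i => (d i : ℂ)) * star U) ⊗ₖ
      (W * Matrix.diagonal (fun j => (t j : ℂ)) * star W)
    = (U ⊗ₖ W) * Matrix.diagonal (fun p : A × B => ((d p.1 * t p.2 : ℝ) : ℂ)) *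
        star (U ⊗ₖ W) := by
  rw [star_kron, Matrix.mul_kronecker_mul, Matrix.mul_kronecker_mul,
    Matrix.diagonal_kronecker_diagonal]
  push_cast
  rfl

lemma trace_one_kron_mul (Q : Matrix B B ℂ) (K : Matrix (A × B) (A × B) ℂ) :
    (((1 : Matrix A A ℂ) ⊗ₖ Q) * K).trace = (Q * ptrA K).trace := by
  simp only [Matrix.trace, Matrix.diag_apply, Matrix.mul_apply, ptrA, Matrix.of_apply,
    Matrix.kroneckerMap_apply, Fintype.sum_prod_type, Matrix.one_apply, mul_ite, ite_mul,
    mul_one, mul_zero, zero_mul, Finset.sum_ite_eq, Finset.mem_univ, if_true,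
    Finset.mul_sum, Finset.sum_mul]
  rw [Finset.sum_comm]
  refine Finset.sum_congr rfl fun y _ => ?_
  simp only [one_mul]
  have hcol : ∀ x : A, (∑ x1 : A, ∑ x2 : B, if x = x1 then Q y x2 * K (x1, x2) (x, y) else 0)
      = ∑ x2 : B, Q y x2 * K (x, x2) (x, y) := by
    intro x
    rw [Finset.sum_comm]
    refine Finset.sum_congr rfl fun x2 _ => ?_
    simp
  rw [Finset.sum_congr rfl fun x _ => hcol x, Finset.sum_comm]

lemma trace_kron_mul (P : Matrix A A ℂ) (Q : Matrix B B ℂ) (M : Matrix (A × B) (A × B) ℂ) :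
    ((P ⊗ₖ Q) * M).trace = (Q * ptrA ((P ⊗ₖ (1 : Matrix B B ℂ)) * M)).trace := by
  have hfac : P ⊗ₖ Q = ((1 : Matrix A A ℂ) ⊗ₖ Q) * (P ⊗ₖ (1 : Matrix B B ℂ)) := by
    rw [← Matrix.mul_kronecker_mul, one_mul, mul_one]
  rw [hfac, mul_assoc, trace_one_kron_mul]


lemma star_mem_unitary {U : Matrix n n ℂ} (hU : U ∈ Matrix.unitaryGroup n ℂ) :
    star U ∈ Matrix.unitaryGroup n ℂ := by
  rw [Matrix.mem_unitaryGroup_iff, star_star]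
  exact Matrix.mem_unitaryGroup_iff'.mp hU

lemma mul_mem_unitary {U V : Matrix n n ℂ} (hU : U ∈ Matrix.unitaryGroup n ℂ)
    (hV : V ∈ Matrix.unitaryGroup n ℂ) : U * V ∈ Matrix.unitaryGroup n ℂ :=
  Submonoid.mul_mem _ hU hV

lemma conj_diag_mul {U : Matrix n n ℂ} (hU : U ∈ Matrix.unitaryGroup n ℂ) (v w : n → ℂ) :
    (U * Matrix.diagonal v * star U) * (U * Matrix.diagonal w * star U)
      = U * Matrix.diagonal (fun i => v i * w i) * star U := by
  have h : star U * U = 1 := Matrix.mem_unitaryGroup_iff'.mp hU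
  calc (U * Matrix.diagonal v * star U) * (U * Matrix.diagonal w * star U)
      = U * Matrix.diagonal v * (star U * U) * Matrix.diagonal w * star U := by
        simp only [Matrix.mul_assoc]
    _ = U * (Matrix.diagonal v * Matrix.diagonal w) * star U := by
        rw [h]; simp only [Matrix.mul_one, Matrix.mul_assoc]
    _ = U * Matrix.diagonal (fun i => v i * w i) * star U := by
        rw [Matrix.diagonal_mul_diagonal]

lemma conj_diag_diagEntry (C : Matrix n n ℂ) (t : n → ℝ) (i : n) :
    (C * Matrix.diagonal (fun j => (t j : ℂ)) * star C) i i
      = ((∑ j, t j * Complex.normSq (C i j) : ℝ) : ℂ) := by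
  rw [Matrix.mul_apply]
  push_cast
  refine Finset.sum_congr rfl fun k _ => ?_
  rw [Matrix.mul_diagonal, Matrix.star_eq_conjTranspose, Matrix.conjTranspose_apply]
  rw [mul_comm (C i k) ((t k : ℂ)), mul_assoc]
  simp [Complex.star_def, Complex.mul_conj]

lemma unitary_row_sum {C : Matrix n n ℂ} (hC : C ∈ Matrix.unitaryGroup n ℂ) (i : n) :
    ∑ j, Complex.normSq (C i j) = 1 := by
  have h : (C * star C) i i = 1 := by
    rw [Matrix.mem_unitaryGroup_iff.mp hC, Matrix.one_apply_eq]
  rw [Matrix.mul_apply] at h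
  have h2 : ∀ j, C i j * star C j i = ((Complex.normSq (C i j) : ℝ) : ℂ) := by
    intro j
    rw [Matrix.star_eq_conjTranspose, Matrix.conjTranspose_apply]
    simp [Complex.star_def, Complex.mul_conj]
  rw [Finset.sum_congr rfl fun j _ => h2 j] at h
  exact_mod_cast h

lemma unitary_col_sum {C : Matrix n n ℂ} (hC : C ∈ Matrix.unitaryGroup n ℂ) (j : n) :
    ∑ i, Complex.normSq (C i j) = 1 := by
  have h : (star C * C) j j = 1 := by
    rw [Matrix.mem_unitaryGroup_iff'.mp hC, Matrix.one_apply_eq]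
  rw [Matrix.mul_apply] at h
  have h2 : ∀ i, star C j i * C i j = ((Complex.normSq (C i j) : ℝ) : ℂ) := by
    intro i
    rw [Matrix.star_eq_conjTranspose, Matrix.conjTranspose_apply, mul_comm]
    simp [Complex.star_def, Complex.mul_conj]
  rw [Finset.sum_congr rfl fun i _ => h2 i] at h
  exact_mod_cast h

lemma ptrA_conj (X Y : Matrix A A ℂ) (M : Matrix (A × B) (A × B) ℂ) :
    ptrA ((X ⊗ₖ (1 : Matrix B B ℂ)) * M * (Y ⊗ₖ (1 : Matrix B B ℂ)))
      = ptrA (((Y * X) ⊗ₖ (1 : Matrix B B ℂ)) * M) := by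
  ext b b'
  simp only [ptrA, Matrix.of_apply, Matrix.mul_apply, Matrix.kroneckerMap_apply,
    Fintype.sum_prod_type, Matrix.one_apply, mul_ite, ite_mul, mul_one, one_mul,
    mul_zero, zero_mul, Finset.sum_ite_eq, Finset.sum_ite_eq', Finset.mem_univ, if_true,
    Finset.mul_sum, Finset.sum_mul]
  rw [Finset.sum_comm]
  refine Finset.sum_congr rfl fun a _ => ?_
  rw [Finset.sum_comm]
  refine Finset.sum_congr rfl fun c _ => ?_
  refine Finset.sum_congr rfl fun d2 _ => ?_
  ring

lemma ptrA_posSemidef {K : Matrix (A × B) (A × B) ℂ} (hK : K.PosSemidef) :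
    (ptrA K).PosSemidef := by
  rw [Matrix.posSemidef_iff_dotProduct_mulVec]
  constructor
  · ext b b'
    simp only [Matrix.conjTranspose_apply, ptrA, Matrix.of_apply, star_sum]
    refine Finset.sum_congr rfl fun a _ => ?_
    have := congrFun (congrFun hK.1 (a, b)) (a, b')
    rw [Matrix.conjTranspose_apply] at this
    exact this
  · intro x
    have key : dotProduct (star x) (ptrA K *ᵥ x)
        = ∑ a, dotProduct (star (fun q : A × B => if q.1 = a then x q.2 else 0))
            (K *ᵥ (fun q : A × B => if q.1 = a then x q.2 else 0)) := by
      have hstar : ∀ (c a : A) (e : B),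
          star (if c = a then x e else (0:ℂ)) = (if c = a then star (x e) else (0:ℂ)) := by
        intros c a e; split <;> simp
      simp only [dotProduct, Matrix.mulVec, ptrA, Matrix.of_apply, Pi.star_apply,
        Fintype.sum_prod_type, hstar, ite_mul, mul_ite, zero_mul, mul_zero,
        Finset.mul_sum, Finset.sum_mul, dotProduct, Finset.sum_ite_eq, Finset.sum_ite_eq',
        Finset.mem_univ, if_true]
      simp only [Finset.sum_ite_irrel, Finset.sum_const_zero, Finset.sum_ite_eq,
        Finset.sum_ite_eq', Finset.mem_univ, if_true]
      calc (∑ x1 : B, ∑ x2 : B, ∑ i : A, star (x x1) * (K (i, x1) (i, x2) * x x2))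
          = ∑ x1 : B, ∑ i : A, ∑ x2 : B, star (x x1) * (K (i, x1) (i, x2) * x x2) :=
            Finset.sum_congr rfl fun x1 _ => Finset.sum_comm
        _ = ∑ i : A, ∑ x1 : B, ∑ x2 : B, star (x x1) * (K (i, x1) (i, x2) * x x2) :=
            Finset.sum_comm
    rw [key]
    exact Finset.sum_nonneg fun a _ => hK.dotProduct_mulVec_nonneg _


lemma Q_formula {α : ℝ} (hα : α ∈ Set.Ioo (0:ℝ) 1)
    (ρ : Matrix (A × B) (A × B) ℂ)
    {σ : Matrix A A ℂ} {U : Matrix A A ℂ} {d : A → ℝ}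
    (hU : U ∈ Matrix.unitaryGroup A ℂ) (hd : ∀ i, 0 ≤ d i)
    (hσ : σ = U * Matrix.diagonal (fun i => (d i : ℂ)) * star U)
    {N : Matrix B B ℂ}
    (hN : N = ptrA ((mpow σ α ⊗ₖ (1 : Matrix B B ℂ)) * mpow ρ (1 - α)))
    {V : Matrix B B ℂ} {m : B → ℝ}
    (hV : V ∈ Matrix.unitaryGroup B ℂ)
    (hNd : N = V * Matrix.diagonal (fun i => (m i : ℂ)) * star V)
    {τ : Matrix B B ℂ} {W : Matrix B B ℂ} {t : B → ℝ}
    (hW : W ∈ Matrix.unitaryGroup B ℂ) (ht : ∀ j, 0 ≤ t j)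
    (hτ : τ = W * Matrix.diagonal (fun j => (t j : ℂ)) * star W) :
    QRenyi α (σ ⊗ₖ τ) ρ
      = ∑ i, m i * (∑ j, (t j) ^ α * Complex.normSq ((star V * W) i j)) := by
  obtain ⟨hα0, hα1⟩ := hα
  have hσα : mpow σ α = U * Matrix.diagonal (fun i => ((d i ^ α : ℝ) : ℂ)) * star U :=
    mpow_eq_rpow hU hd hσ hα0
  have hτα : mpow τ α = W * Matrix.diagonal (fun j => ((t j ^ α : ℝ) : ℂ)) * star W :=
    mpow_eq_rpow hW ht hτ hα0
  have hkron : σ ⊗ₖ τ = (U ⊗ₖ W) *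
      Matrix.diagonal (fun p : A × B => ((d p.1 * t p.2 : ℝ) : ℂ)) * star (U ⊗ₖ W) := by
    rw [hσ, hτ]; exact kron_conj_decomp U W d t
  have hmk : mpow (σ ⊗ₖ τ) α = (U ⊗ₖ W) *
      Matrix.diagonal (fun p : A × B => (((d p.1 * t p.2) ^ α : ℝ) : ℂ)) * star (U ⊗ₖ W) :=
    mpow_eq_rpow (kron_unitary hU hW) (fun p => mul_nonneg (hd _) (ht _)) hkron hα0
  have hsplit : mpow (σ ⊗ₖ τ) α = mpow σ α ⊗ₖ mpow τ α := by
    rw [hmk, hσα, hτα, kron_conj_decomp]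
    have hfun : (fun p : A × B => (((d p.1 * t p.2) ^ α : ℝ) : ℂ))
        = fun p : A × B => ((d p.1 ^ α * t p.2 ^ α : ℝ) : ℂ) := by
      funext p; rw [Real.mul_rpow (hd _) (ht _)]
    rw [hfun]
  have h1 : QRenyi α (σ ⊗ₖ τ) ρ = ((mpow τ α * N).trace).re := by
    rw [QRenyi, hsplit, trace_kron_mul, ← hN]
  have hentry : ∀ i, (star V * mpow τ α * V) i i
      = ((∑ j, t j ^ α * Complex.normSq ((star V * W) i j) : ℝ) : ℂ) := by
    intro i
    have hC : star V * mpow τ α * V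
        = (star V * W) * Matrix.diagonal (fun j => ((t j ^ α : ℝ) : ℂ)) * star (star V * W) := by
      rw [hτα, StarMul.star_mul, star_star]
      simp only [Matrix.mul_assoc]
    rw [hC]
    exact conj_diag_diagEntry (star V * W) (fun j => t j ^ α) i
  have h2 : (mpow τ α * N).trace
      = ∑ i, ((∑ j, t j ^ α * Complex.normSq ((star V * W) i j) : ℝ) : ℂ) * (m i : ℂ) := by
    rw [hNd]
    have hc : (mpow τ α * (V * Matrix.diagonal (fun i => (m i : ℂ)) * star V)).trace
        = ((star V * mpow τ α * V) * Matrix.diagonal (fun i => (m i : ℂ))).trace := by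
      simp only [← Matrix.mul_assoc]
      rw [Matrix.trace_mul_cycle]
      simp only [Matrix.mul_assoc]
    rw [hc, trace_mul_diagonal]
    exact Finset.sum_congr rfl fun i _ => by rw [hentry i]
  rw [h1, h2]
  have h3 : (∑ i, ((∑ j, t j ^ α * Complex.normSq ((star V * W) i j) : ℝ) : ℂ) * (m i : ℂ))
      = ((∑ i, (∑ j, t j ^ α * Complex.normSq ((star V * W) i j)) * m i : ℝ) : ℂ) := by
    push_cast; ring
  rw [h3, Complex.ofReal_re]
  exact Finset.sum_congr rfl fun i _ => mul_comm _ _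

end PMHelper

/-- Partial minimizer for the doubly minimized Petz Rényi lautum information
(Theorem 1(g)). -/
theorem partial_minimizer_Ldd {A B : Type*} [Fintype A] [DecidableEq A] [Nonempty A]
    [Fintype B] [DecidableEq B] [Nonempty B]
    (α : ℝ) (hα : α ∈ Set.Ioo (0 : ℝ) 1)
    (ρ : MState (A × B)) (σ : MState A)
    (N : Matrix B B ℂ)
    (hN : N = ptrA ((mpow σ.mat α ⊗ₖ (1 : Matrix B B ℂ)) * mpow ρ.mat (1 - α)))
    (hNtr : N.trace ≠ 0)
    (τhat : Matrix B B ℂ)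
    (hτhat : τhat = ((mpow N (1 / (1 - α))).trace)⁻¹ • mpow N (1 / (1 - α))) :
    ∀ τ : MState B,
      DRenyi α (σ.mat ⊗ₖ τhat) ρ.mat ≤ DRenyi α (σ.mat ⊗ₖ τ.mat) ρ.mat := by
  intro τ
  obtain ⟨hα0, hα1⟩ := hα
  have h1α : (0:ℝ) < 1 - α := by linarith
  obtain ⟨U, d, hU, hd, hσd⟩ := PMHelper.psd_decomp σ.mat σ.posSemidef
  -- N is positive semidefinite
  have hρpsd : (mpow ρ.mat (1 - α)).PosSemidef := by
    obtain ⟨P, r, hP, hr, hρd⟩ := PMHelper.psd_decomp ρ.mat ρ.posSemidef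
    exact PMHelper.posSemidef_decomp (fun i => Real.rpow_nonneg (hr i) _) _
      (PMHelper.mpow_eq_rpow hP hr hρd h1α)
  have hσhalf : mpow σ.mat (α/2)
      = U * Matrix.diagonal (fun i => ((d i ^ (α/2) : ℝ) : ℂ)) * star U :=
    PMHelper.mpow_eq_rpow hU hd hσd (by linarith)
  have hXX : mpow σ.mat (α/2) * mpow σ.mat (α/2) = mpow σ.mat α := by
    rw [hσhalf, PMHelper.conj_diag_mul hU, PMHelper.mpow_eq_rpow hU hd hσd hα0]
    have hfun : (fun i => ((d i ^ (α/2) : ℝ) : ℂ) * ((d i ^ (α/2) : ℝ) : ℂ))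
        = fun i => ((d i ^ α : ℝ) : ℂ) := by
      funext i
      have h := (Real.rpow_add' (hd i) (y := α/2) (z := α/2) (by linarith)).symm
      rw [show α/2 + α/2 = α by ring] at h
      rw [← Complex.ofReal_mul, h]
    rw [hfun]
  have hXherm : star (mpow σ.mat (α/2)) = mpow σ.mat (α/2) :=
    (PMHelper.isHermitian_decomp _ _ hσhalf)
  have hXstar : star ((mpow σ.mat (α/2)) ⊗ₖ (1 : Matrix B B ℂ))
      = (mpow σ.mat (α/2)) ⊗ₖ (1 : Matrix B B ℂ) := by
    rw [PMHelper.star_kron, hXherm, star_one]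
  have hNpsd : N.PosSemidef := by
    have h := PMHelper.ptrA_conj (mpow σ.mat (α/2)) (mpow σ.mat (α/2)) (mpow ρ.mat (1-α))
    rw [hXX] at h
    have hKpsd : (((mpow σ.mat (α/2)) ⊗ₖ (1 : Matrix B B ℂ)) * mpow ρ.mat (1-α) *
        ((mpow σ.mat (α/2)) ⊗ₖ (1 : Matrix B B ℂ))).PosSemidef := by
      have h2 := hρpsd.mul_mul_conjTranspose_same ((mpow σ.mat (α/2)) ⊗ₖ (1 : Matrix B B ℂ))
      rwa [← Matrix.star_eq_conjTranspose, hXstar] at h2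
    rw [hN, ← h]
    exact PMHelper.ptrA_posSemidef hKpsd
  obtain ⟨V, m, hV, hm, hNd⟩ := PMHelper.psd_decomp N hNpsd
  set T : ℝ := ∑ i, m i ^ (1/(1-α)) with hTdef
  have hmex : ∃ i, m i ≠ 0 := by
    by_contra h
    push_neg at h
    apply hNtr
    rw [hNd, PMHelper.trace_conj_diag hV]
    simp [h]
  have hTpos : 0 < T := by
    obtain ⟨i0, hi0⟩ := hmex
    exact Finset.sum_pos' (fun i _ => Real.rpow_nonneg (hm i) _)
      ⟨i0, Finset.mem_univ _,
        Real.rpow_pos_of_pos (lt_of_le_of_ne (hm i0) (Ne.symm hi0)) _⟩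
  have hmp : mpow N (1/(1-α))
      = V * Matrix.diagonal (fun i => ((m i ^ (1/(1-α)) : ℝ) : ℂ)) * star V :=
    PMHelper.mpow_eq_rpow hV hm hNd (by positivity)
  have htraceN : (mpow N (1/(1-α))).trace = (T : ℂ) := by
    rw [hmp, PMHelper.trace_conj_diag hV, hTdef]
    push_cast
    rfl
  set u : B → ℝ := fun i => T⁻¹ * m i ^ (1/(1-α)) with hu
  have hu0 : ∀ i, 0 ≤ u i := fun i =>
    mul_nonneg (inv_nonneg.mpr hTpos.le) (Real.rpow_nonneg (hm i) _)
  have hτhatd : τhat = V * Matrix.diagonal (fun i => ((u i : ℝ) : ℂ)) * star V := by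
    rw [hτhat, htraceN, hmp, ← Complex.ofReal_inv, ← smul_mul_assoc, ← mul_smul_comm]
    have hdiag : (((T⁻¹ : ℝ) : ℂ)) • Matrix.diagonal (fun i => ((m i ^ (1/(1-α)) : ℝ) : ℂ))
        = Matrix.diagonal (fun i => ((u i : ℝ) : ℂ)) := by
      rw [← Matrix.diagonal_smul]
      have hfun2 : ((((T⁻¹ : ℝ) : ℂ)) • fun i => ((m i ^ (1/(1-α)) : ℝ) : ℂ))
          = fun i => ((u i : ℝ) : ℂ) := by
        funext i
        simp only [Pi.smul_apply, smul_eq_mul]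
        rw [hu]
        push_cast
        ring
      rw [hfun2]
    rw [hdiag]
  obtain ⟨W, t, hW, ht, hτd⟩ := PMHelper.psd_decomp τ.mat τ.posSemidef
  have hQτ := PMHelper.Q_formula ⟨hα0, hα1⟩ ρ.mat hU hd hσd hN hV hNd hW ht hτd
  have hQτh := PMHelper.Q_formula ⟨hα0, hα1⟩ ρ.mat hU hd hσd hN hV hNd hV hu0 hτhatd
  have hCid : star V * V = 1 := Matrix.mem_unitaryGroup_iff'.mp hV
  -- Q at τ-hat equals T ^ (1 - α)
  have hQτh2 : QRenyi α (σ.mat ⊗ₖ τhat) ρ.mat = T ^ (1-α) := by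
    rw [hQτh, hCid]
    have hrow : ∀ i, (∑ j, u j ^ α * Complex.normSq ((1 : Matrix B B ℂ) i j)) = u i ^ α := by
      intro i
      rw [Finset.sum_eq_single i]
      · rw [Matrix.one_apply_eq]
        simp
      · intro j _ hj
        rw [Matrix.one_apply_ne' hj]
        simp
      · intro h
        exact absurd (Finset.mem_univ i) h
    rw [Finset.sum_congr rfl fun i _ => by rw [hrow i]]
    have hterm : ∀ i, m i * u i ^ α = T ^ (-α) * m i ^ (1/(1-α)) := by
      intro i
      have hq : (1 : ℝ) + (1/(1-α)) * α = 1/(1-α) := by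
        field_simp
        ring
      have h1 : (T⁻¹) ^ α = T ^ (-α) := by
        rw [Real.inv_rpow hTpos.le, Real.rpow_neg hTpos.le]
      have h2 : (m i ^ (1/(1-α))) ^ α = m i ^ ((1/(1-α)) * α) :=
        (Real.rpow_mul (hm i) _ _).symm
      have hmul0 : (0:ℝ) ≤ (1/(1-α)) * α := mul_nonneg (by positivity) hα0.le
      have hne : (1 : ℝ) + (1/(1-α)) * α ≠ 0 := by linarith
      have h3 : m i * m i ^ ((1/(1-α)) * α) = m i ^ (1/(1-α)) := by
        calc m i * m i ^ ((1/(1-α)) * α)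
            = m i ^ (1:ℝ) * m i ^ ((1/(1-α)) * α) := by rw [Real.rpow_one]
          _ = m i ^ (1 + (1/(1-α)) * α) := (Real.rpow_add' (hm i) hne).symm
          _ = m i ^ (1/(1-α)) := by rw [hq]
      calc m i * u i ^ α
          = m i * ((T⁻¹) ^ α * (m i ^ (1/(1-α))) ^ α) := by
            rw [hu]
            dsimp only
            rw [Real.mul_rpow (inv_nonneg.mpr hTpos.le) (Real.rpow_nonneg (hm i) _)]
        _ = T ^ (-α) * (m i * m i ^ ((1/(1-α)) * α)) := by rw [h1, h2]; ring
        _ = T ^ (-α) * m i ^ (1/(1-α)) := by rw [h3]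
    rw [Finset.sum_congr rfl fun i _ => hterm i, ← Finset.mul_sum, ← hTdef]
    rw [show (1-α : ℝ) = -α + 1 by ring, Real.rpow_add hTpos, Real.rpow_one]
  -- Q at τ is at most T ^ (1 - α)
  have hCuni : star V * W ∈ Matrix.unitaryGroup B ℂ :=
    PMHelper.mul_mem_unitary (PMHelper.star_mem_unitary hV) hW
  set w : B → B → ℝ := fun i j => Complex.normSq ((star V * W) i j) with hw
  have hw0 : ∀ i j, 0 ≤ w i j := fun i j => Complex.normSq_nonneg _
  have hrow1 : ∀ i, ∑ j, w i j = 1 := fun i => PMHelper.unitary_row_sum hCuni i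
  have hcol1 : ∀ j, ∑ i, w i j = 1 := fun j => PMHelper.unitary_col_sum hCuni j
  set s : B → ℝ := fun i => ∑ j, t j * w i j with hs
  have hs0 : ∀ i, 0 ≤ s i := fun i =>
    Finset.sum_nonneg fun j _ => mul_nonneg (ht j) (hw0 i j)
  have htsum : ∑ j, t j = 1 := by
    have h := τ.trace_one
    rw [hτd, PMHelper.trace_conj_diag hW] at h
    exact_mod_cast h
  have hssum : ∑ i, s i = 1 := by
    rw [hs]
    rw [Finset.sum_comm]
    calc ∑ j, ∑ i, t j * w i j = ∑ j, t j * ∑ i, w i j := by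
          exact Finset.sum_congr rfl fun j _ => (Finset.mul_sum _ _ _).symm
      _ = ∑ j, t j := by
          exact Finset.sum_congr rfl fun j _ => by rw [hcol1 j, mul_one]
      _ = 1 := htsum
  have hinvα : 1 ≤ 1/α := (one_lt_one_div hα0 hα1).le
  have hjensen : ∀ i, (∑ j, t j ^ α * w i j) ≤ s i ^ α := by
    intro i
    have h := Real.arith_mean_le_rpow_mean Finset.univ (w i) (fun j => t j ^ α)
      (fun j _ => hw0 i j) (hrow1 i) (fun j _ => Real.rpow_nonneg (ht j) _) hinvα
    rw [one_div_one_div] at h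
    have he : ∀ j, (t j ^ α) ^ (1/α) = t j := by
      intro j
      rw [← Real.rpow_mul (ht j), mul_one_div_cancel (ne_of_gt hα0), Real.rpow_one]
    calc (∑ j, t j ^ α * w i j) = ∑ j, w i j * t j ^ α :=
          Finset.sum_congr rfl fun j _ => mul_comm _ _
      _ ≤ (∑ j, w i j * (t j ^ α) ^ (1/α)) ^ α := h
      _ = (∑ j, t j * w i j) ^ α := by
          rw [Finset.sum_congr rfl fun j _ => by rw [he j, mul_comm]]
      _ = s i ^ α := rfl
  have hconj : Real.HolderConjugate (1/α) (1/(1-α)) :=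
    Real.holderConjugate_iff.mpr ⟨one_lt_one_div hα0 hα1, by
      rw [one_div, one_div, inv_inv, inv_inv]; ring⟩
  have hQle : QRenyi α (σ.mat ⊗ₖ τ.mat) ρ.mat ≤ T ^ (1-α) := by
    rw [hQτ]
    calc (∑ i, m i * (∑ j, t j ^ α * w i j))
        ≤ ∑ i, m i * s i ^ α := Finset.sum_le_sum fun i _ =>
          mul_le_mul_of_nonneg_left (hjensen i) (hm i)
      _ = ∑ i, s i ^ α * m i := Finset.sum_congr rfl fun i _ => mul_comm _ _
      _ ≤ (∑ i, (s i ^ α) ^ (1/α)) ^ (1/(1/α)) * (∑ i, m i ^ (1/(1-α))) ^ (1/(1/(1-α))) :=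
          Real.inner_le_Lp_mul_Lq_of_nonneg Finset.univ hconj
            (fun i _ => Real.rpow_nonneg (hs0 i) _) (fun i _ => hm i)
      _ = T ^ (1-α) := by
          rw [one_div_one_div, one_div_one_div]
          have he : ∀ i, (s i ^ α) ^ (1/α) = s i := by
            intro i
            rw [← Real.rpow_mul (hs0 i), mul_one_div_cancel (ne_of_gt hα0), Real.rpow_one]
          rw [Finset.sum_congr rfl fun i _ => he i, hssum, Real.one_rpow, one_mul, ← hTdef]
  have hQ0 : 0 ≤ QRenyi α (σ.mat ⊗ₖ τ.mat) ρ.mat := by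
    rw [hQτ]
    exact Finset.sum_nonneg fun i _ => mul_nonneg (hm i) (Finset.sum_nonneg fun j _ =>
      mul_nonneg (Real.rpow_nonneg (ht j) _) (Complex.normSq_nonneg _))
  have hQhpos : (0:ℝ) < T ^ (1-α) := Real.rpow_pos_of_pos hTpos _
  rw [DRenyi, DRenyi, hQτh2]
  by_cases hz : QRenyi α (σ.mat ⊗ₖ τ.mat) ρ.mat = 0
  · rw [if_pos hz, if_neg (ne_of_gt hQhpos)]
    exact le_top
  · rw [if_neg (ne_of_gt hQhpos), if_neg hz]
    apply EReal.coe_le_coe_iff.mpr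
    have hQpos : 0 < QRenyi α (σ.mat ⊗ₖ τ.mat) ρ.mat := lt_of_le_of_ne hQ0 (Ne.symm hz)
    have hlog : Real.log (QRenyi α (σ.mat ⊗ₖ τ.mat) ρ.mat) ≤ Real.log (T ^ (1-α)) :=
      Real.log_le_log hQpos hQle
    have hneg : (α - 1)⁻¹ ≤ 0 := inv_nonpos.mpr (by linarith)
    exact mul_le_mul_of_nonpos_left hlog hneg

end
end

section
/- Convexity in the Rényi order (Theorem 1(j)): Let A and B be nonempty finite types and ρ_AB a bipartite state on A × B. Then the real-valued function α ↦ (α − 1) · L_α^↓↓(A:B)_ρ is convex on the open interval (0,1) (where L_α^↓↓(A:B)_ρ is finite for every α ∈ (0,1)). -/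
open scoped BigOperators Kronecker ComplexOrder

noncomputable section

section Helpers
open Matrix Finset
variable {n : Type*} [Fintype n] [DecidableEq n]

noncomputable def pw (a p : ℝ) : ℝ := if a = 0 then 0 else a ^ p

lemma pw_nonneg {a : ℝ} (ha : 0 ≤ a) (p : ℝ) : 0 ≤ pw a p := by
  unfold pw; split
  · exact le_rfl
  · exact Real.rpow_nonneg ha p

lemma pw_le_one {a : ℝ} (ha : 0 ≤ a) (ha1 : a ≤ 1) {p : ℝ} (hp : 0 ≤ p) : pw a p ≤ 1 := by
  unfold pw; split
  · exact zero_le_one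
  · exact Real.rpow_le_one ha ha1 hp

lemma pw_pos {a : ℝ} (ha : 0 < a) (p : ℝ) : 0 < pw a p := by
  unfold pw; rw [if_neg ha.ne']; exact Real.rpow_pos_of_pos ha p

lemma pw_comb {a : ℝ} (ha : 0 ≤ a) {θ θ' : ℝ} (hθ : 0 < θ) (hθ' : 0 < θ')
    (p q : ℝ) : pw a (θ * p + θ' * q) = pw a p ^ θ * pw a q ^ θ' := by
  unfold pw
  by_cases h : a = 0
  · simp [h, Real.zero_rpow hθ.ne', Real.zero_rpow hθ'.ne']
  · have hp : 0 < a := lt_of_le_of_ne ha (Ne.symm h)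
    rw [if_neg h, if_neg h, if_neg h, Real.rpow_add hp, mul_comm θ p, mul_comm θ' q,
      Real.rpow_mul ha, Real.rpow_mul ha]

lemma sum_normSq_row {W : Matrix n n ℂ} (h : W * Wᴴ = 1) (i : n) :
    ∑ j, Complex.normSq (W i j) = 1 := by
  have h2 := congrFun (congrFun h i) i
  rw [Matrix.mul_apply] at h2
  simp only [Matrix.conjTranspose_apply, Matrix.one_apply_eq, RCLike.star_def,
    Complex.mul_conj] at h2
  exact_mod_cast h2

lemma sum_normSq_col {W : Matrix n n ℂ} (h : Wᴴ * W = 1) (j : n) :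
    ∑ i, Complex.normSq (W i j) = 1 := by
  have h2 := congrFun (congrFun h j) j
  rw [Matrix.mul_apply] at h2
  simp only [Matrix.conjTranspose_apply, Matrix.one_apply_eq, RCLike.star_def] at h2
  have h3 : ∑ i, ((Complex.normSq (W i j) : ℝ) : ℂ) = 1 := by
    rw [← h2]
    refine Finset.sum_congr rfl fun i _ => ?_
    rw [mul_comm, Complex.mul_conj]
  exact_mod_cast h3

lemma trace_mpow_mul (X Y : Matrix n n ℂ) (hX : X.IsHermitian) (hY : Y.IsHermitian) (p q : ℝ) :
    (mpow X p * mpow Y q).trace =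
      ((∑ i, ∑ j, Complex.normSq (((hX.eigenvectorUnitary : Matrix n n ℂ)ᴴ *
          (hY.eigenvectorUnitary : Matrix n n ℂ)) i j) *
        pw (hX.eigenvalues i) p * pw (hY.eigenvalues j) q : ℝ) : ℂ) := by
  set U := (hX.eigenvectorUnitary : Matrix n n ℂ) with hU
  set V := (hY.eigenvectorUnitary : Matrix n n ℂ) with hV
  have hUU : U * Uᴴ = 1 := by
    rw [← Matrix.star_eq_conjTranspose]
    exact Unitary.mul_star_self_of_mem hX.eigenvectorUnitary.prop
  have hUU' : Uᴴ * U = 1 := by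
    rw [← Matrix.star_eq_conjTranspose]
    exact Unitary.star_mul_self_of_mem hX.eigenvectorUnitary.prop
  have hVV : V * Vᴴ = 1 := by
    rw [← Matrix.star_eq_conjTranspose]
    exact Unitary.mul_star_self_of_mem hY.eigenvectorUnitary.prop
  set W := Uᴴ * V with hW
  set D := Matrix.diagonal (fun i => ((pw (hX.eigenvalues i) p : ℝ) : ℂ)) with hD
  set E := Matrix.diagonal (fun j => ((pw (hY.eigenvalues j) q : ℝ) : ℂ)) with hE
  have hmX : mpow X p = U * D * Uᴴ := by
    rw [mpow, dif_pos hX, Matrix.star_eq_conjTranspose]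
    rfl
  have hmY : mpow Y q = V * E * Vᴴ := by
    rw [mpow, dif_pos hY, Matrix.star_eq_conjTranspose]
    rfl
  have hWH : Wᴴ = Vᴴ * U := by
    rw [hW, Matrix.conjTranspose_mul, Matrix.conjTranspose_conjTranspose]
  have key : mpow X p * mpow Y q = U * (D * W * E * Wᴴ) * Uᴴ := by
    rw [hmX, hmY, hWH, hW]
    simp only [Matrix.mul_assoc]
    rw [hUU, Matrix.mul_one]
  rw [key, Matrix.trace_mul_cycle, ← Matrix.mul_assoc, hUU', Matrix.one_mul]
  have expand : (D * W * E * Wᴴ).trace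
      = ∑ i, ∑ j, ((pw (hX.eigenvalues i) p : ℝ) : ℂ) * (W i j *
          (((pw (hY.eigenvalues j) q : ℝ) : ℂ) * star (W i j))) := by
    rw [hD, hE]
    simp [Matrix.trace, Matrix.mul_apply, Matrix.diagonal_apply, Matrix.conjTranspose_apply,
      Finset.mul_sum, ite_mul, zero_mul, Finset.sum_ite_eq, Finset.mul_sum]
    exact Finset.sum_congr rfl fun i _ => Finset.sum_congr rfl fun j _ => by ring
  rw [expand]
  push_cast
  refine Finset.sum_congr rfl fun i _ => Finset.sum_congr rfl fun j _ => ?_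
  rw [← Complex.mul_conj (W i j)]
  simp only [RCLike.star_def]
  ring

noncomputable def QRform (X Y : Matrix n n ℂ) (hX : X.IsHermitian) (hY : Y.IsHermitian)
    (p : ℝ) : ℝ :=
  ∑ i, ∑ j, Complex.normSq (((hX.eigenvectorUnitary : Matrix n n ℂ)ᴴ *
      (hY.eigenvectorUnitary : Matrix n n ℂ)) i j) *
    pw (hX.eigenvalues i) p * pw (hY.eigenvalues j) (1 - p)

lemma QRenyi_eq_form (X Y : Matrix n n ℂ) (hX : X.IsHermitian) (hY : Y.IsHermitian) (p : ℝ) :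
    QRenyi p X Y = QRform X Y hX hY p := by
  rw [QRenyi, trace_mpow_mul X Y hX hY p (1 - p), Complex.ofReal_re, QRform]

lemma W_mul_conjTranspose (X Y : Matrix n n ℂ) (hX : X.IsHermitian) (hY : Y.IsHermitian) :
    ((hX.eigenvectorUnitary : Matrix n n ℂ)ᴴ * (hY.eigenvectorUnitary : Matrix n n ℂ)) *
      ((hX.eigenvectorUnitary : Matrix n n ℂ)ᴴ * (hY.eigenvectorUnitary : Matrix n n ℂ))ᴴ = 1 := by
  set U := (hX.eigenvectorUnitary : Matrix n n ℂ)
  set V := (hY.eigenvectorUnitary : Matrix n n ℂ)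
  have hVV : V * Vᴴ = 1 := by
    rw [← Matrix.star_eq_conjTranspose]
    exact Unitary.mul_star_self_of_mem hY.eigenvectorUnitary.prop
  have hUU' : Uᴴ * U = 1 := by
    rw [← Matrix.star_eq_conjTranspose]
    exact Unitary.star_mul_self_of_mem hX.eigenvectorUnitary.prop
  rw [Matrix.conjTranspose_mul, Matrix.conjTranspose_conjTranspose]
  calc Uᴴ * V * (Vᴴ * U) = Uᴴ * (V * Vᴴ) * U := by simp only [Matrix.mul_assoc]
  _ = 1 := by rw [hVV, Matrix.mul_one, hUU']

lemma conjTranspose_W_mul (X Y : Matrix n n ℂ) (hX : X.IsHermitian) (hY : Y.IsHermitian) :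
    ((hX.eigenvectorUnitary : Matrix n n ℂ)ᴴ * (hY.eigenvectorUnitary : Matrix n n ℂ))ᴴ *
      ((hX.eigenvectorUnitary : Matrix n n ℂ)ᴴ * (hY.eigenvectorUnitary : Matrix n n ℂ)) = 1 := by
  set U := (hX.eigenvectorUnitary : Matrix n n ℂ)
  set V := (hY.eigenvectorUnitary : Matrix n n ℂ)
  have hUU : U * Uᴴ = 1 := by
    rw [← Matrix.star_eq_conjTranspose]
    exact Unitary.mul_star_self_of_mem hX.eigenvectorUnitary.prop
  have hVV' : Vᴴ * V = 1 := by
    rw [← Matrix.star_eq_conjTranspose]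
    exact Unitary.star_mul_self_of_mem hY.eigenvectorUnitary.prop
  rw [Matrix.conjTranspose_mul, Matrix.conjTranspose_conjTranspose]
  calc Vᴴ * U * (Uᴴ * V) = Vᴴ * (U * Uᴴ) * V := by simp only [Matrix.mul_assoc]
  _ = 1 := by rw [hUU, Matrix.mul_one, hVV']

lemma QRform_nonneg {X Y : Matrix n n ℂ} (hX : X.PosSemidef) (hY : Y.PosSemidef) (p : ℝ) :
    0 ≤ QRform X Y hX.1 hY.1 p := by
  refine Finset.sum_nonneg fun i _ => Finset.sum_nonneg fun j _ => ?_
  exact mul_nonneg (mul_nonneg (Complex.normSq_nonneg _)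
    (pw_nonneg (hX.eigenvalues_nonneg i) _)) (pw_nonneg (hY.eigenvalues_nonneg j) _)

lemma sum_eigenvalues_eq_one {X : Matrix n n ℂ} (hX : X.IsHermitian) (htr : X.trace = 1) :
    ∑ i, hX.eigenvalues i = 1 := by
  have hUU' : (hX.eigenvectorUnitary : Matrix n n ℂ)ᴴ * (hX.eigenvectorUnitary : Matrix n n ℂ)
      = 1 := by
    rw [← Matrix.star_eq_conjTranspose]
    exact Unitary.star_mul_self_of_mem hX.eigenvectorUnitary.prop
  have h2 : X.trace = ∑ i, (hX.eigenvalues i : ℂ) := by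
    conv_lhs => rw [hX.spectral_theorem, Unitary.conjStarAlgAut_apply]
    rw [Matrix.star_eq_conjTranspose, Matrix.trace_mul_cycle, hUU',
      Matrix.one_mul, Matrix.trace_diagonal]
    rfl
  rw [htr] at h2
  exact_mod_cast h2.symm

lemma eigenvalue_le_one {X : Matrix n n ℂ} (hX : X.PosSemidef) (htr : X.trace = 1) (i : n) :
    hX.1.eigenvalues i ≤ 1 := by
  rw [← sum_eigenvalues_eq_one hX.1 htr]
  exact Finset.single_le_sum (fun j _ => hX.eigenvalues_nonneg j) (Finset.mem_univ i)

lemma QRform_le_card {X Y : Matrix n n ℂ} (hX : X.PosSemidef) (hY : Y.PosSemidef)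
    (htrX : X.trace = 1) (htrY : Y.trace = 1) {p : ℝ} (hp : 0 ≤ p) (hp1 : p ≤ 1) :
    QRform X Y hX.1 hY.1 p ≤ Fintype.card n := by
  have hbound : QRform X Y hX.1 hY.1 p ≤
      ∑ i, ∑ j, Complex.normSq (((hX.1.eigenvectorUnitary : Matrix n n ℂ)ᴴ *
        (hY.1.eigenvectorUnitary : Matrix n n ℂ)) i j) := by
    refine Finset.sum_le_sum fun i _ => Finset.sum_le_sum fun j _ => ?_
    have h1 : pw (hX.1.eigenvalues i) p ≤ 1 :=
      pw_le_one (hX.eigenvalues_nonneg i) (eigenvalue_le_one hX htrX i) hp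
    have h2 : pw (hY.1.eigenvalues j) (1 - p) ≤ 1 :=
      pw_le_one (hY.eigenvalues_nonneg j) (eigenvalue_le_one hY htrY j) (by linarith)
    calc Complex.normSq _ * pw (hX.1.eigenvalues i) p * pw (hY.1.eigenvalues j) (1 - p)
        ≤ Complex.normSq _ * 1 * 1 := by
          refine mul_le_mul (mul_le_mul le_rfl h1 (pw_nonneg (hX.eigenvalues_nonneg i) _)
            (Complex.normSq_nonneg _)) h2
            (pw_nonneg (hY.eigenvalues_nonneg j) _) ?_
          have := Complex.normSq_nonneg ((((hX.1.eigenvectorUnitary : Matrix n n ℂ)ᴴ *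
            (hY.1.eigenvectorUnitary : Matrix n n ℂ)) i j))
          nlinarith [pw_nonneg (hX.eigenvalues_nonneg i) p]
      _ = Complex.normSq _ := by ring
  refine hbound.trans ?_
  have : ∀ i : n, ∑ j, Complex.normSq (((hX.1.eigenvectorUnitary : Matrix n n ℂ)ᴴ *
      (hY.1.eigenvectorUnitary : Matrix n n ℂ)) i j) = 1 :=
    fun i => sum_normSq_row (W_mul_conjTranspose X Y hX.1 hY.1) i
  simp [this]

lemma QRform_pos {X Y : Matrix n n ℂ} (hX : X.PosDef) (hY : Y.PosSemidef)
    (htrY : Y.trace = 1) (p : ℝ) :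
    0 < QRform X Y hX.posSemidef.1 hY.1 p := by
  obtain ⟨j₀, hj₀⟩ : ∃ j, 0 < hY.1.eigenvalues j := by
    by_contra hcon
    push_neg at hcon
    have : ∑ j, hY.1.eigenvalues j = 0 :=
      le_antisymm (Finset.sum_nonpos fun j _ => hcon j)
        (Finset.sum_nonneg fun j _ => hY.eigenvalues_nonneg j)
    rw [sum_eigenvalues_eq_one hY.1 htrY] at this
    norm_num at this
  obtain ⟨i₀, hi₀⟩ : ∃ i, 0 < Complex.normSq
      (((hX.posSemidef.1.eigenvectorUnitary : Matrix n n ℂ)ᴴ *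
        (hY.1.eigenvectorUnitary : Matrix n n ℂ)) i j₀) := by
    by_contra hcon
    push_neg at hcon
    have : ∑ i, Complex.normSq (((hX.posSemidef.1.eigenvectorUnitary : Matrix n n ℂ)ᴴ *
        (hY.1.eigenvectorUnitary : Matrix n n ℂ)) i j₀) = 0 :=
      le_antisymm (Finset.sum_nonpos fun i _ => hcon i)
        (Finset.sum_nonneg fun i _ => Complex.normSq_nonneg _)
    rw [sum_normSq_col (conjTranspose_W_mul X Y hX.posSemidef.1 hY.1) j₀] at this
    norm_num at this
  refine Finset.sum_pos' (fun i _ => Finset.sum_nonneg fun j _ => ?_) ⟨i₀, Finset.mem_univ i₀, ?_⟩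
  · exact mul_nonneg (mul_nonneg (Complex.normSq_nonneg _)
      (pw_nonneg (hX.posSemidef.eigenvalues_nonneg i) _))
      (pw_nonneg (hY.eigenvalues_nonneg j) _)
  · refine Finset.sum_pos' (fun j _ => ?_) ⟨j₀, Finset.mem_univ j₀, ?_⟩
    · exact mul_nonneg (mul_nonneg (Complex.normSq_nonneg _)
        (pw_nonneg (hX.posSemidef.eigenvalues_nonneg i₀) _))
        (pw_nonneg (hY.eigenvalues_nonneg j) _)
    · exact mul_pos (mul_pos hi₀ (pw_pos (hX.eigenvalues_pos i₀) p)) (pw_pos hj₀ (1 - p))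

lemma QRform_holder {X Y : Matrix n n ℂ} (hX : X.PosSemidef) (hY : Y.PosSemidef)
    {θ θ' : ℝ} (hθ : 0 < θ) (hθ' : 0 < θ') (hsum : θ + θ' = 1) (p q : ℝ) :
    QRform X Y hX.1 hY.1 (θ * p + θ' * q) ≤
      QRform X Y hX.1 hY.1 p ^ θ * QRform X Y hX.1 hY.1 q ^ θ' := by
  set W := ((hX.1.eigenvectorUnitary : Matrix n n ℂ)ᴴ * (hY.1.eigenvectorUnitary : Matrix n n ℂ))
  set a := hX.1.eigenvalues
  set b := hY.1.eigenvalues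
  set u : n × n → ℝ := fun x => Complex.normSq (W x.1 x.2) * pw (a x.1) p * pw (b x.2) (1 - p)
    with hu
  set v : n × n → ℝ := fun x => Complex.normSq (W x.1 x.2) * pw (a x.1) q * pw (b x.2) (1 - q)
    with hv
  have hun : ∀ x : n × n, 0 ≤ u x := fun x =>
    mul_nonneg (mul_nonneg (Complex.normSq_nonneg _)
      (pw_nonneg (hX.eigenvalues_nonneg x.1) _)) (pw_nonneg (hY.eigenvalues_nonneg x.2) _)
  have hvn : ∀ x : n × n, 0 ≤ v x := fun x =>
    mul_nonneg (mul_nonneg (Complex.normSq_nonneg _)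
      (pw_nonneg (hX.eigenvalues_nonneg x.1) _)) (pw_nonneg (hY.eigenvalues_nonneg x.2) _)
  have hform : ∀ r : ℝ, QRform X Y hX.1 hY.1 r =
      ∑ x : n × n, Complex.normSq (W x.1 x.2) * pw (a x.1) r * pw (b x.2) (1 - r) := by
    intro r
    rw [QRform, Fintype.sum_prod_type]
  have hmid : ∀ x : n × n,
      Complex.normSq (W x.1 x.2) * pw (a x.1) (θ * p + θ' * q) *
        pw (b x.2) (1 - (θ * p + θ' * q)) = u x ^ θ * v x ^ θ' := by
    intro x
    have h1 : (1 : ℝ) - (θ * p + θ' * q) = θ * (1 - p) + θ' * (1 - q) := by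
      linear_combination -hsum
    have hc : Complex.normSq (W x.1 x.2) =
        Complex.normSq (W x.1 x.2) ^ θ * Complex.normSq (W x.1 x.2) ^ θ' := by
      rw [← Real.rpow_add' (Complex.normSq_nonneg _) (by rw [hsum]; norm_num), hsum,
        Real.rpow_one]
    rw [h1, pw_comb (hX.eigenvalues_nonneg x.1) hθ hθ' p q,
      pw_comb (hY.eigenvalues_nonneg x.2) hθ hθ' (1 - p) (1 - q)]
    simp only [hu, hv]
    rw [Real.mul_rpow (mul_nonneg (Complex.normSq_nonneg _)
        (pw_nonneg (hX.eigenvalues_nonneg x.1) _)) (pw_nonneg (hY.eigenvalues_nonneg x.2) _),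
      Real.mul_rpow (Complex.normSq_nonneg _) (pw_nonneg (hX.eigenvalues_nonneg x.1) _),
      Real.mul_rpow (mul_nonneg (Complex.normSq_nonneg _)
        (pw_nonneg (hX.eigenvalues_nonneg x.1) _)) (pw_nonneg (hY.eigenvalues_nonneg x.2) _),
      Real.mul_rpow (Complex.normSq_nonneg _) (pw_nonneg (hX.eigenvalues_nonneg x.1) _)]
    conv_lhs => rw [hc]
    ring
  have hθ1 : θ < 1 := by linarith
  have hconj : Real.HolderConjugate (1 / θ) (1 / θ') := by
    exact Real.holderConjugate_one_div hθ hθ' hsum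
  have hH := Real.inner_le_Lp_mul_Lq_of_nonneg (s := Finset.univ) hconj
    (f := fun x : n × n => u x ^ θ) (g := fun x : n × n => v x ^ θ')
    (fun x _ => Real.rpow_nonneg (hun x) θ) (fun x _ => Real.rpow_nonneg (hvn x) θ')
  have hsimp1 : ∀ x : n × n, (u x ^ θ) ^ (1 / θ) = u x := by
    intro x
    rw [← Real.rpow_mul (hun x), mul_one_div, div_self hθ.ne', Real.rpow_one]
  have hsimp2 : ∀ x : n × n, (v x ^ θ') ^ (1 / θ') = v x := by
    intro x
    rw [← Real.rpow_mul (hvn x), mul_one_div, div_self hθ'.ne', Real.rpow_one]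
  calc QRform X Y hX.1 hY.1 (θ * p + θ' * q)
      = ∑ x : n × n, u x ^ θ * v x ^ θ' := by
        rw [hform]
        exact Finset.sum_congr rfl fun x _ => hmid x
    _ ≤ (∑ x : n × n, u x) ^ θ * (∑ x : n × n, v x) ^ θ' := by
        simpa only [hsimp1, hsimp2, one_div_one_div] using hH
    _ = QRform X Y hX.1 hY.1 p ^ θ * QRform X Y hX.1 hY.1 q ^ θ' := by
        rw [hform p, hform q]

end Helpers

section KronHelpers
open Matrix
variable {m : Type*} [Fintype m] [DecidableEq m] {n : Type*} [Fintype n] [DecidableEq n]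

lemma kron_conjTranspose (X : Matrix m m ℂ) (Y : Matrix n n ℂ) :
    (X ⊗ₖ Y)ᴴ = Xᴴ ⊗ₖ Yᴴ := by
  ext ⟨i, j⟩ ⟨k, l⟩
  simp [Matrix.conjTranspose_apply, Matrix.kroneckerMap_apply]

lemma posSemidef_kron {X : Matrix m m ℂ} {Y : Matrix n n ℂ} (hX : X.PosSemidef)
    (hY : Y.PosSemidef) : (X ⊗ₖ Y).PosSemidef := by
  exact hX.kronecker hY

lemma posDef_smul_one {c : ℝ} (hc : 0 < c) : (((c : ℂ)) • (1 : Matrix n n ℂ)).PosDef := by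
  rw [Matrix.posDef_iff_dotProduct_mulVec]
  constructor
  · simp [Matrix.IsHermitian, Matrix.conjTranspose_smul]
  · intro x hx
    have h1 : ((c : ℂ) • (1 : Matrix n n ℂ)) *ᵥ x = (c : ℂ) • x := by
      rw [Matrix.smul_mulVec, Matrix.one_mulVec]
    rw [h1, dotProduct_smul, smul_eq_mul]
    exact mul_pos (Complex.zero_lt_real.mpr hc) (dotProduct_star_self_pos_iff.mpr hx)

noncomputable def mixedSt (n : Type*) [Fintype n] [DecidableEq n] [Nonempty n] : MState n where
  mat := (((Fintype.card n : ℝ)⁻¹ : ℝ) : ℂ) • 1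
  posSemidef := (posDef_smul_one (by
    have : 0 < (Fintype.card n : ℝ) := by exact_mod_cast Fintype.card_pos
    positivity)).posSemidef
  trace_one := by
    rw [Matrix.trace_smul, Matrix.trace_one, smul_eq_mul]
    have : (Fintype.card n : ℝ) ≠ 0 := by exact_mod_cast Fintype.card_pos.ne'
    push_cast
    field_simp

lemma mixed_kron (A B : Type*) [Fintype A] [DecidableEq A] [Nonempty A]
    [Fintype B] [DecidableEq B] [Nonempty B] :
    (mixedSt A).mat ⊗ₖ (mixedSt B).mat =
      ((((Fintype.card A : ℝ)⁻¹ * (Fintype.card B : ℝ)⁻¹ : ℝ)) : ℂ) • 1 := by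
  show ((((Fintype.card A : ℝ)⁻¹ : ℝ) : ℂ) • (1 : Matrix A A ℂ)) ⊗ₖ
      ((((Fintype.card B : ℝ)⁻¹ : ℝ) : ℂ) • (1 : Matrix B B ℂ)) = _
  rw [Matrix.smul_kronecker, Matrix.kronecker_smul, Matrix.one_kronecker_one, smul_smul]
  push_cast
  ring_nf

end KronHelpers

section StateHelpers
open Matrix
variable {A B : Type*} [Fintype A] [DecidableEq A] [Fintype B] [DecidableEq B]

noncomputable def Qst (α : ℝ) (ρ : Matrix (A × B) (A × B) ℂ) (στ : MState A × MState B) : ℝ :=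
  QRenyi α (στ.1.mat ⊗ₖ στ.2.mat) ρ

noncomputable def Gs (α : ℝ) (ρ : Matrix (A × B) (A × B) ℂ) : ℝ :=
  sSup (Set.range (Qst α ρ))

lemma kron_psd (στ : MState A × MState B) : (στ.1.mat ⊗ₖ στ.2.mat).PosSemidef :=
  posSemidef_kron στ.1.posSemidef στ.2.posSemidef

lemma kron_tr (στ : MState A × MState B) : (στ.1.mat ⊗ₖ στ.2.mat).trace = 1 := by
  rw [Matrix.trace_kronecker, στ.1.trace_one, στ.2.trace_one, mul_one]

lemma Qst_eq_form (ρ : MState (A × B)) (α : ℝ) (στ : MState A × MState B) :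
    Qst α ρ.mat στ = QRform (στ.1.mat ⊗ₖ στ.2.mat) ρ.mat (kron_psd στ).1 ρ.posSemidef.1 α :=
  QRenyi_eq_form _ _ _ _ _

lemma Qst_nonneg (ρ : MState (A × B)) (α : ℝ) (στ : MState A × MState B) :
    0 ≤ Qst α ρ.mat στ := by
  rw [Qst_eq_form]
  exact QRform_nonneg (kron_psd στ) ρ.posSemidef α

lemma Qst_le_card (ρ : MState (A × B)) {α : ℝ} (h0 : 0 ≤ α) (h1 : α ≤ 1)
    (στ : MState A × MState B) : Qst α ρ.mat στ ≤ Fintype.card (A × B) := by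
  rw [Qst_eq_form]
  exact QRform_le_card (kron_psd στ) ρ.posSemidef (kron_tr στ) ρ.trace_one h0 h1

lemma Qst_bddAbove (ρ : MState (A × B)) {α : ℝ} (h0 : 0 ≤ α) (h1 : α ≤ 1) :
    BddAbove (Set.range (Qst α ρ.mat)) := by
  refine ⟨Fintype.card (A × B), ?_⟩
  rintro q ⟨στ, rfl⟩
  exact Qst_le_card ρ h0 h1 στ

lemma Qst_holder (ρ : MState (A × B)) {θ θ' : ℝ} (hθ : 0 < θ) (hθ' : 0 < θ')
    (hsum : θ + θ' = 1) (p q : ℝ) (στ : MState A × MState B) :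
    Qst (θ * p + θ' * q) ρ.mat στ ≤ Qst p ρ.mat στ ^ θ * Qst q ρ.mat στ ^ θ' := by
  rw [Qst_eq_form, Qst_eq_form, Qst_eq_form]
  exact QRform_holder (kron_psd στ) ρ.posSemidef hθ hθ' hsum p q

variable [Nonempty A] [Nonempty B]

lemma Qst_range_nonempty (α : ℝ) (ρ : Matrix (A × B) (A × B) ℂ) :
    (Set.range (Qst α ρ)).Nonempty :=
  ⟨_, ⟨(mixedSt A, mixedSt B), rfl⟩⟩

lemma Qst_mixed_pos (ρ : MState (A × B)) (α : ℝ) :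
    0 < Qst α ρ.mat (mixedSt A, mixedSt B) := by
  have hpd : ((mixedSt A).mat ⊗ₖ (mixedSt B).mat).PosDef := by
    rw [mixed_kron]
    refine posDef_smul_one ?_
    have hA : 0 < (Fintype.card A : ℝ) := by exact_mod_cast Fintype.card_pos
    have hB : 0 < (Fintype.card B : ℝ) := by exact_mod_cast Fintype.card_pos
    positivity
  rw [Qst_eq_form]
  exact QRform_pos hpd ρ.posSemidef ρ.trace_one α

lemma Gs_pos (ρ : MState (A × B)) {α : ℝ} (h0 : 0 ≤ α) (h1 : α ≤ 1) :
    0 < Gs α ρ.mat :=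
  lt_of_lt_of_le (Qst_mixed_pos ρ α)
    (le_csSup (Qst_bddAbove ρ h0 h1) ⟨(mixedSt A, mixedSt B), rfl⟩)

theorem LddEq (ρ : MState (A × B)) {α : ℝ} (hα : α ∈ Set.Ioo (0 : ℝ) 1) :
    Ldd α ρ.mat = (((α - 1)⁻¹ * Real.log (Gs α ρ.mat) : ℝ) : EReal) := by
  obtain ⟨hα0, hα1⟩ := hα
  have h1neg : α - 1 < 0 := by linarith
  have h1ne : α - 1 ≠ 0 := h1neg.ne
  have hinv : (α - 1)⁻¹ < 0 := inv_lt_zero.mpr h1neg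
  have hGpos : 0 < Gs α ρ.mat := Gs_pos ρ hα0.le hα1.le
  have hbdd := Qst_bddAbove ρ hα0.le hα1.le
  refine le_antisymm ?_ ?_
  · by_contra h
    rw [not_le] at h
    obtain ⟨r, hr1, hr2⟩ := EReal.exists_between_coe_real h
    have hr1' : (α - 1)⁻¹ * Real.log (Gs α ρ.mat) < r := by exact_mod_cast hr1
    have h2 : r * (α - 1) < Real.log (Gs α ρ.mat) := by
      have := mul_lt_mul_of_neg_right hr1' h1neg
      calc r * (α - 1) < (α - 1)⁻¹ * Real.log (Gs α ρ.mat) * (α - 1) := this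
        _ = Real.log (Gs α ρ.mat) := by field_simp
    have h3 : Real.exp (r * (α - 1)) < Gs α ρ.mat := by
      rw [← Real.exp_log hGpos]
      exact Real.exp_lt_exp.mpr h2
    obtain ⟨q, hqmem, hq⟩ := exists_lt_of_lt_csSup (Qst_range_nonempty α ρ.mat) h3
    obtain ⟨στ, rfl⟩ := hqmem
    have hqpos : 0 < Qst α ρ.mat στ := (Real.exp_pos _).trans hq
    have hlog : r * (α - 1) < Real.log (Qst α ρ.mat στ) :=
      (Real.lt_log_iff_exp_lt hqpos).mpr hq
    have hD : DRenyi α (στ.1.mat ⊗ₖ στ.2.mat) ρ.mat =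
        (((α - 1)⁻¹ * Real.log (Qst α ρ.mat στ) : ℝ) : EReal) := by
      rw [DRenyi, if_neg]
      · rfl
      · exact hqpos.ne'
    have hDr : DRenyi α (στ.1.mat ⊗ₖ στ.2.mat) ρ.mat < (r : EReal) := by
      rw [hD]
      have hstep : (α - 1)⁻¹ * Real.log (Qst α ρ.mat στ) < (α - 1)⁻¹ * (r * (α - 1)) :=
        mul_lt_mul_of_neg_left hlog hinv
      have heq : (α - 1)⁻¹ * (r * (α - 1)) = r := by field_simp
      have : (α - 1)⁻¹ * Real.log (Qst α ρ.mat στ) < r := heq ▸ hstep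
      exact_mod_cast this
    have hle : Ldd α ρ.mat ≤ DRenyi α (στ.1.mat ⊗ₖ στ.2.mat) ρ.mat :=
      iInf_le_of_le στ.1 (iInf_le_of_le στ.2 le_rfl)
    exact absurd (hr2.trans (hle.trans_lt hDr)) (lt_irrefl _)
  · refine le_iInf fun σ => le_iInf fun τ => ?_
    rw [DRenyi]
    split_ifs with h
    · exact le_top
    · have hQpos : 0 < QRenyi α (σ.mat ⊗ₖ τ.mat) ρ.mat :=
        lt_of_le_of_ne (Qst_nonneg ρ α (σ, τ)) (Ne.symm h)
      have hQle : QRenyi α (σ.mat ⊗ₖ τ.mat) ρ.mat ≤ Gs α ρ.mat :=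
        le_csSup hbdd ⟨(σ, τ), rfl⟩
      have hlog : Real.log (QRenyi α (σ.mat ⊗ₖ τ.mat) ρ.mat) ≤ Real.log (Gs α ρ.mat) :=
        (Real.log_le_log_iff hQpos hGpos).mpr hQle
      exact EReal.coe_le_coe_iff.mpr (mul_le_mul_of_nonpos_left hlog hinv.le)

end StateHelpers

/-- Convexity in the Rényi order (Theorem 1(j)): `α ↦ (α - 1) L_α^{↓↓}` is convex on
`(0,1)`, where `L_α^{↓↓}` is finite for every `α ∈ (0,1)`. -/
theorem Ldd_mul_convex {A B : Type*} [Fintype A] [DecidableEq A] [Nonempty A]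
    [Fintype B] [DecidableEq B] [Nonempty B] (ρ : MState (A × B)) :
    (∀ α ∈ Set.Ioo (0 : ℝ) 1, Ldd α ρ.mat ≠ ⊤) ∧
      ConvexOn ℝ (Set.Ioo (0 : ℝ) 1) (fun α => (α - 1) * (Ldd α ρ.mat).toReal) := by
  have hf : ∀ γ, γ ∈ Set.Ioo (0 : ℝ) 1 →
      (γ - 1) * (Ldd γ ρ.mat).toReal = Real.log (Gs γ ρ.mat) := by
    intro γ hγ
    rw [LddEq ρ hγ, EReal.toReal_coe]
    have h1 : γ - 1 ≠ 0 := sub_ne_zero.mpr (ne_of_lt hγ.2)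
    field_simp
  constructor
  · intro α hα
    rw [LddEq ρ hα]
    exact EReal.coe_ne_top _
  · refine ⟨convex_Ioo 0 1, ?_⟩
    intro x hx y hy a b ha hb hab
    have hz : a * x + b * y ∈ Set.Ioo (0 : ℝ) 1 := by
      have := (convex_Ioo (0 : ℝ) 1) hx hy ha hb hab
      simpa [smul_eq_mul] using this
    simp only [smul_eq_mul]
    rw [hf _ hz, hf _ hx, hf _ hy]
    rcases eq_or_lt_of_le ha with rfl | ha'
    · have hb1 : b = 1 := by linarith
      subst hb1
      simp
    rcases eq_or_lt_of_le hb with rfl | hb'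
    · have ha1 : a = 1 := by linarith
      subst ha1
      simp
    have hGx : 0 < Gs x ρ.mat := Gs_pos ρ hx.1.le hx.2.le
    have hGy : 0 < Gs y ρ.mat := Gs_pos ρ hy.1.le hy.2.le
    have hGz : 0 < Gs (a * x + b * y) ρ.mat := Gs_pos ρ hz.1.le hz.2.le
    have key : Gs (a * x + b * y) ρ.mat ≤ Gs x ρ.mat ^ a * Gs y ρ.mat ^ b := by
      refine csSup_le (Qst_range_nonempty _ ρ.mat) ?_
      rintro q ⟨στ, rfl⟩
      have hH : Qst (a * x + b * y) ρ.mat στ ≤ Qst x ρ.mat στ ^ a * Qst y ρ.mat στ ^ b :=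
        Qst_holder ρ ha' hb' hab x y στ
      refine hH.trans (mul_le_mul ?_ ?_ ?_ ?_)
      · exact Real.rpow_le_rpow (Qst_nonneg ρ x στ)
          (le_csSup (Qst_bddAbove ρ hx.1.le hx.2.le) ⟨στ, rfl⟩) ha
      · exact Real.rpow_le_rpow (Qst_nonneg ρ y στ)
          (le_csSup (Qst_bddAbove ρ hy.1.le hy.2.le) ⟨στ, rfl⟩) hb
      · exact Real.rpow_nonneg (Qst_nonneg ρ y στ) _
      · exact Real.rpow_nonneg hGx.le _
    calc Real.log (Gs (a * x + b * y) ρ.mat)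
        ≤ Real.log (Gs x ρ.mat ^ a * Gs y ρ.mat ^ b) :=
          (Real.log_le_log_iff hGz
            (mul_pos (Real.rpow_pos_of_pos hGx a) (Real.rpow_pos_of_pos hGy b))).mpr key
      _ = a * Real.log (Gs x ρ.mat) + b * Real.log (Gs y ρ.mat) := by
          rw [Real.log_mul (Real.rpow_pos_of_pos hGx a).ne' (Real.rpow_pos_of_pos hGy b).ne',
            Real.log_rpow hGx, Real.log_rpow hGy]

end
end

section
/- Gibbs-form partial minimizer for the tumula information (Theorem 2(a)): Let A and B be nonempty finite types, ρ_AB a positive definite bipartite state on A × B, and σ_A a state on A. Let M be the matrix on B given by M b b' := ∑ a, ((σ_A ⊗ 1_B) · log ρ_AB) (a,b) (a,b') (the partial trace over A of (σ_A ⊗ 1_B) · log ρ_AB), where log ρ_AB is obtained by applying Real.log to the eigenvalues in a spectral decomposition of ρ_AB. Define τ*_B := exp(M) / Tr[exp(M)], where exp is the matrix exponential. Then τ*_B is a state on B and for every state τ_B on B, D(σ_A ⊗ τ*_B ‖ ρ_AB) ≤ D(σ_A ⊗ τ_B ‖ ρ_AB). -/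
open scoped BigOperators Kronecker ComplexOrder

noncomputable section

namespace Aux

open Matrix

variable {n : Type*} [Fintype n] [DecidableEq n]

/-- conjugation by a unitary with a real diagonal is Hermitian -/
lemma isHermitian_conj_diag (V : Matrix.unitaryGroup n ℂ) (d : n → ℝ) :
    ((V : Matrix n n ℂ) * Matrix.diagonal (fun i => (d i : ℂ)) *
      star (V : Matrix n n ℂ)).IsHermitian := by
  unfold Matrix.IsHermitian
  simp only [Matrix.star_eq_conjTranspose, Matrix.conjTranspose_mul,
    Matrix.conjTranspose_conjTranspose, Matrix.diagonal_conjTranspose, mul_assoc]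
  congr 1
  ext i
  simp [Complex.conj_ofReal]

/-- key: applying a function to the diagonal is independent of the chosen decomposition -/
lemma conj_diag_eq (V W : Matrix.unitaryGroup n ℂ) (d e : n → ℝ) (g : ℝ → ℝ)
    (h : (V : Matrix n n ℂ) * Matrix.diagonal (fun i => (d i : ℂ)) * star (V : Matrix n n ℂ)
       = (W : Matrix n n ℂ) * Matrix.diagonal (fun i => (e i : ℂ)) * star (W : Matrix n n ℂ)) :
    (V : Matrix n n ℂ) * Matrix.diagonal (fun i => (g (d i) : ℂ)) * star (V : Matrix n n ℂ)
       = (W : Matrix n n ℂ) * Matrix.diagonal (fun i => (g (e i) : ℂ))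
          * star (W : Matrix n n ℂ) := by
  set Vm := (V : Matrix n n ℂ) with hVm
  set Wm := (W : Matrix n n ℂ) with hWm
  have hV1 : star Vm * Vm = 1 := (Matrix.mem_unitaryGroup_iff').mp V.2
  have hV2 : Vm * star Vm = 1 := (Matrix.mem_unitaryGroup_iff).mp V.2
  have hW1 : star Wm * Wm = 1 := (Matrix.mem_unitaryGroup_iff').mp W.2
  have hW2 : Wm * star Wm = 1 := (Matrix.mem_unitaryGroup_iff).mp W.2
  set P := star Wm * Vm with hPdef
  have hPP : P * star P = 1 := by
    simp only [hPdef, Matrix.star_mul, star_star]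
    calc star Wm * Vm * (star Vm * Wm) = star Wm * (Vm * star Vm) * Wm := by
          noncomm_ring
      _ = 1 := by rw [hV2, mul_one, hW1]
  have hPP' : star P * P = 1 := by
    simp only [hPdef, Matrix.star_mul, star_star]
    calc star Vm * Wm * (star Wm * Vm) = star Vm * (Wm * star Wm) * Vm := by
          noncomm_ring
      _ = 1 := by rw [hW2, mul_one, hV1]
  have h1 : P * Matrix.diagonal (fun i => (d i : ℂ)) * star P
      = Matrix.diagonal (fun i => (e i : ℂ)) := by
    have := congrArg (fun X => star Wm * X * Wm) h
    calc P * Matrix.diagonal (fun i => (d i : ℂ)) * star P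
        = star Wm * (Vm * Matrix.diagonal (fun i => (d i : ℂ)) * star Vm) * Wm := by
          simp only [hPdef, Matrix.star_mul, star_star]; noncomm_ring
      _ = star Wm * (Wm * Matrix.diagonal (fun i => (e i : ℂ)) * star Wm) * Wm := by rw [h]
      _ = (star Wm * Wm) * Matrix.diagonal (fun i => (e i : ℂ)) * (star Wm * Wm) := by
          noncomm_ring
      _ = Matrix.diagonal (fun i => (e i : ℂ)) := by rw [hW1]; simp
  have hP : P * Matrix.diagonal (fun i => (d i : ℂ))
      = Matrix.diagonal (fun i => (e i : ℂ)) * P := by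
    calc P * Matrix.diagonal (fun i => (d i : ℂ))
        = P * Matrix.diagonal (fun i => (d i : ℂ)) * (star P * P) := by rw [hPP']; simp
      _ = (P * Matrix.diagonal (fun i => (d i : ℂ)) * star P) * P := by noncomm_ring
      _ = Matrix.diagonal (fun i => (e i : ℂ)) * P := by rw [h1]
  have key : ∀ i j, P i j * ((g (d j) : ℝ) : ℂ) = ((g (e i) : ℝ) : ℂ) * P i j := by
    intro i j
    have h2 : P i j * ((d j : ℝ) : ℂ) = ((e i : ℝ) : ℂ) * P i j := by
      have := congrFun (congrFun hP i) j
      simpa [Matrix.mul_diagonal, Matrix.diagonal_mul] using this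
    by_cases hPij : P i j = 0
    · simp [hPij]
    · have hde : d j = e i := by
        have : P i j * ((d j : ℝ) : ℂ) = P i j * ((e i : ℝ) : ℂ) := by
          rw [h2]; ring
        exact_mod_cast mul_left_cancel₀ hPij this
      rw [hde, mul_comm]
  have hP2 : P * Matrix.diagonal (fun i => ((g (d i) : ℝ) : ℂ))
      = Matrix.diagonal (fun i => ((g (e i) : ℝ) : ℂ)) * P := by
    ext i j
    simpa [Matrix.mul_diagonal, Matrix.diagonal_mul] using key i j
  have hVW : Vm = Wm * P := by
    rw [hPdef, ← mul_assoc, hW2, one_mul]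
  calc Vm * Matrix.diagonal (fun i => ((g (d i) : ℝ) : ℂ)) * star Vm
      = Wm * (P * Matrix.diagonal (fun i => ((g (d i) : ℝ) : ℂ)) * star P) * star Wm := by
        rw [hVW, Matrix.star_mul]; noncomm_ring
    _ = Wm * (Matrix.diagonal (fun i => ((g (e i) : ℝ) : ℂ)) * (P * star P)) * star Wm := by
        rw [hP2]; noncomm_ring
    _ = Wm * Matrix.diagonal (fun i => ((g (e i) : ℝ) : ℂ)) * star Wm := by
        rw [hPP]; noncomm_ring

lemma trace_conj_diag (V : Matrix.unitaryGroup n ℂ) (d : n → ℝ) :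
    ((V : Matrix n n ℂ) * Matrix.diagonal (fun i => (d i : ℂ)) *
      star (V : Matrix n n ℂ)).trace = ((∑ i, d i : ℝ) : ℂ) := by
  rw [Matrix.trace_mul_cycle, (Matrix.mem_unitaryGroup_iff').mp V.2, one_mul,
    Matrix.trace_diagonal]
  push_cast
  rfl

lemma trace_cross (V W : Matrix.unitaryGroup n ℂ) (d e : n → ℝ) :
    (((V : Matrix n n ℂ) * Matrix.diagonal (fun i => (d i : ℂ)) * star (V : Matrix n n ℂ)) *
     ((W : Matrix n n ℂ) * Matrix.diagonal (fun i => (e i : ℂ)) * star (W : Matrix n n ℂ))).trace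
    = ((∑ i, ∑ j, d i * e j *
        Complex.normSq ((star (V : Matrix n n ℂ) * (W : Matrix n n ℂ)) i j) : ℝ) : ℂ) := by
  set Vm := (V : Matrix n n ℂ)
  set Wm := (W : Matrix n n ℂ)
  set C := star Vm * Wm with hC
  set Dd := Matrix.diagonal (fun i => (d i : ℂ)) with hDd
  set De := Matrix.diagonal (fun i => (e i : ℂ)) with hDe
  have key : ((Vm * Dd * star Vm) * (Wm * De * star Wm)).trace
      = (Dd * (C * De * star C)).trace := by
    rw [show (Vm * Dd * star Vm) * (Wm * De * star Wm)
        = Vm * (Dd * star Vm * (Wm * De * star Wm)) from by simp only [mul_assoc]]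
    rw [Matrix.trace_mul_comm]
    congr 1
    simp only [hC, Matrix.star_mul, star_star, mul_assoc]
  rw [key]
  have h2 : ∀ i, (Dd * (C * De * star C)) i i
      = ∑ j, ((d i * e j * Complex.normSq (C i j) : ℝ) : ℂ) := by
    intro i
    rw [hDd, Matrix.diagonal_mul]
    rw [show C * De * star C = (C * De) * star C from rfl]
    rw [Matrix.mul_apply, Finset.mul_sum]
    refine Finset.sum_congr rfl fun j _ => ?_
    rw [Matrix.mul_diagonal]
    simp only [Matrix.star_eq_conjTranspose, Matrix.conjTranspose_apply]
    rw [show (d i : ℂ) * (C i j * (e j : ℂ) * star (C i j)) = (d i : ℂ) * (e j : ℂ)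
        * (C i j * star (C i j)) from by ring]
    rw [RCLike.star_def, Complex.mul_conj]
    push_cast
    ring
  rw [Matrix.trace]
  unfold Matrix.diag
  push_cast
  refine Finset.sum_congr rfl fun i _ => (h2 i).trans ?_
  push_cast
  rfl

lemma kron_conjTranspose {A B : Type*} [Fintype A] [Fintype B]
    (M : Matrix A A ℂ) (N : Matrix B B ℂ) : (M ⊗ₖ N)ᴴ = Mᴴ ⊗ₖ Nᴴ := by
  ext ⟨i, j⟩ ⟨k, l⟩
  simp [Matrix.conjTranspose_apply, Matrix.kroneckerMap_apply]

lemma kron_unitary {A B : Type*} [Fintype A] [DecidableEq A] [Fintype B] [DecidableEq B]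
    (V : Matrix.unitaryGroup A ℂ) (W : Matrix.unitaryGroup B ℂ) :
    ((V : Matrix A A ℂ) ⊗ₖ (W : Matrix B B ℂ)) ∈ Matrix.unitaryGroup (A × B) ℂ := by
  rw [Matrix.mem_unitaryGroup_iff, Matrix.star_eq_conjTranspose, kron_conjTranspose,
    ← Matrix.mul_kronecker_mul]
  have hv : (V : Matrix A A ℂ) * (V : Matrix A A ℂ)ᴴ = 1 := by
    rw [← Matrix.star_eq_conjTranspose]; exact (Matrix.mem_unitaryGroup_iff).mp V.2
  have hw : (W : Matrix B B ℂ) * (W : Matrix B B ℂ)ᴴ = 1 := by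
    rw [← Matrix.star_eq_conjTranspose]; exact (Matrix.mem_unitaryGroup_iff).mp W.2
  rw [hv, hw, Matrix.one_kronecker_one]

lemma mlog_of_decomp (V : Matrix.unitaryGroup n ℂ) (d : n → ℝ) (X : Matrix n n ℂ)
    (hX : X = (V : Matrix n n ℂ) * Matrix.diagonal (fun i => (d i : ℂ)) *
      star (V : Matrix n n ℂ)) :
    mlog X = (V : Matrix n n ℂ) * Matrix.diagonal (fun i => ((Real.log (d i) : ℝ) : ℂ)) *
      star (V : Matrix n n ℂ) := by
  have hH : X.IsHermitian := hX ▸ isHermitian_conj_diag V d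
  rw [mlog, dif_pos hH]
  refine conj_diag_eq hH.eigenvectorUnitary V hH.eigenvalues d Real.log ?_
  have h2 := hH.spectral_theorem
  rw [show Matrix.diagonal (RCLike.ofReal ∘ hH.eigenvalues)
      = Matrix.diagonal (fun i => ((hH.eigenvalues i : ℝ) : ℂ)) from rfl] at h2
  simp only [Unitary.conjStarAlgAut_apply] at h2
  rw [← h2, ← hX]

lemma trace_eq_sum_eigen (X : Matrix n n ℂ) (hH : X.IsHermitian) :
    X.trace = ((∑ i, hH.eigenvalues i : ℝ) : ℂ) := by
  conv_lhs => rw [hH.spectral_theorem]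
  exact trace_conj_diag hH.eigenvectorUnitary hH.eigenvalues

variable {A' B' : Type*} [Fintype A'] [DecidableEq A'] [Fintype B'] [DecidableEq B']

lemma ptrA_entry (σ : Matrix A' A' ℂ) (L : Matrix (A' × B') (A' × B') ℂ) (b b' : B') :
    ptrA ((σ ⊗ₖ (1 : Matrix B' B' ℂ)) * L) b b'
      = ∑ a, ∑ a', σ a a' * L (a', b) (a, b') := by
  unfold ptrA
  simp only [Matrix.of_apply]
  refine Finset.sum_congr rfl fun a _ => ?_
  rw [Matrix.mul_apply]
  rw [Fintype.sum_prod_type]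
  refine Finset.sum_congr rfl fun a' _ => ?_
  simp [Matrix.kroneckerMap_apply, Matrix.one_apply, Finset.sum_ite_eq, ite_mul, mul_assoc]

lemma M_isHermitian (σ : Matrix A' A' ℂ) (L : Matrix (A' × B') (A' × B') ℂ)
    (hσ : σ.IsHermitian) (hL : L.IsHermitian) :
    (ptrA ((σ ⊗ₖ (1 : Matrix B' B' ℂ)) * L)).IsHermitian := by
  rw [Matrix.IsHermitian]
  ext b b'
  rw [Matrix.conjTranspose_apply, ptrA_entry, ptrA_entry]
  rw [star_sum]
  rw [Finset.sum_comm]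
  refine Finset.sum_congr rfl fun a _ => ?_
  rw [star_sum]
  refine Finset.sum_congr rfl fun a' _ => ?_
  rw [star_mul']
  congr 1
  · have h1 := congrFun (congrFun hσ a') a
    rwa [Matrix.conjTranspose_apply] at h1
  · have h2 := congrFun (congrFun hL (a, b)) (a', b')
    rwa [Matrix.conjTranspose_apply] at h2

lemma trace_kron_mul (σ : Matrix A' A' ℂ) (τ : Matrix B' B' ℂ)
    (L : Matrix (A' × B') (A' × B') ℂ) :
    ((σ ⊗ₖ τ) * L).trace = (τ * ptrA ((σ ⊗ₖ (1 : Matrix B' B' ℂ)) * L)).trace := by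
  rw [Matrix.trace, Matrix.trace]
  unfold Matrix.diag
  rw [Fintype.sum_prod_type]
  rw [Finset.sum_comm]
  refine Finset.sum_congr rfl fun b _ => ?_
  have lhs : ∀ a, ((σ ⊗ₖ τ) * L) (a, b) (a, b)
      = ∑ a', ∑ b', σ a a' * τ b b' * L (a', b') (a, b) := by
    intro a
    rw [Matrix.mul_apply, Fintype.sum_prod_type]
    rfl
  have rhs : (τ * ptrA ((σ ⊗ₖ (1 : Matrix B' B' ℂ)) * L)) b b
      = ∑ b', ∑ a, ∑ a', τ b b' * (σ a a' * L (a', b') (a, b)) := by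
    rw [Matrix.mul_apply]
    refine Finset.sum_congr rfl fun b' _ => ?_
    rw [ptrA_entry, Finset.mul_sum]
    refine Finset.sum_congr rfl fun a _ => ?_
    rw [Finset.mul_sum]
  simp only [lhs, rhs]
  conv_rhs => rw [Finset.sum_comm]
  refine Finset.sum_congr rfl fun a _ => ?_
  conv_rhs => rw [Finset.sum_comm]
  refine Finset.sum_congr rfl fun a' _ => ?_
  refine Finset.sum_congr rfl fun b' _ => ?_
  ring

lemma trace_conj_diag_mul (V : Matrix.unitaryGroup n ℂ) (d e : n → ℝ) :
    (((V : Matrix n n ℂ) * Matrix.diagonal (fun i => (d i : ℂ)) * star (V : Matrix n n ℂ)) *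
     ((V : Matrix n n ℂ) * Matrix.diagonal (fun i => (e i : ℂ)) * star (V : Matrix n n ℂ))).trace
    = ((∑ i, d i * e i : ℝ) : ℂ) := by
  rw [trace_cross V V d e, (Matrix.mem_unitaryGroup_iff').mp V.2]
  congr 1
  refine Finset.sum_congr rfl fun i _ => ?_
  rw [Finset.sum_eq_single i]
  · simp [Matrix.one_apply]
  · intro j _ hj
    simp [Matrix.one_apply, Ne.symm hj]
  · intro h
    exact absurd (Finset.mem_univ i) h

lemma ker_eq_bot_of_posDef {X : Matrix n n ℂ} (hX : X.PosDef) :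
    LinearMap.ker (Matrix.toLin' X) = ⊥ := by
  rw [LinearMap.ker_eq_bot']
  intro x hx
  by_contra hne
  have h1 := hX.dotProduct_mulVec_pos hne
  rw [Matrix.toLin'_apply] at hx
  rw [hx] at h1
  simp at h1

lemma relEnt_formula {A B : Type*} [Fintype A] [DecidableEq A] [Fintype B] [DecidableEq B]
    (ρm : Matrix (A × B) (A × B) ℂ) (hρ : ρm.PosDef)
    (σm : Matrix A A ℂ) (Vσ : Matrix.unitaryGroup A ℂ) (p : A → ℝ)
    (hσdec : σm = (Vσ : Matrix A A ℂ) * Matrix.diagonal (fun i => (p i : ℂ)) *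
      star (Vσ : Matrix A A ℂ)) (hp1 : ∑ i, p i = 1)
    (τm : Matrix B B ℂ) (V : Matrix.unitaryGroup B ℂ) (q : B → ℝ)
    (hτdec : τm = (V : Matrix B B ℂ) * Matrix.diagonal (fun i => (q i : ℂ)) *
      star (V : Matrix B B ℂ)) (hq1 : ∑ j, q j = 1) :
    relEnt (σm ⊗ₖ τm) ρm
      = (((∑ i, p i * Real.log (p i)) + (∑ j, q j * Real.log (q j))
          - ((τm * ptrA ((σm ⊗ₖ (1 : Matrix B B ℂ)) * mlog ρm)).trace).re : ℝ) : EReal) := by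
  have hker : LinearMap.ker (Matrix.toLin' ρm) = ⊥ := ker_eq_bot_of_posDef hρ
  rw [relEnt, if_pos (by rw [hker]; exact bot_le)]
  -- decomposition of the Kronecker product
  set K : Matrix.unitaryGroup (A × B) ℂ :=
    ⟨(Vσ : Matrix A A ℂ) ⊗ₖ (V : Matrix B B ℂ), kron_unitary Vσ V⟩ with hK
  set d : A × B → ℝ := fun ij => p ij.1 * q ij.2 with hd
  have hXdec : σm ⊗ₖ τm = (K : Matrix (A × B) (A × B) ℂ) *
      Matrix.diagonal (fun ij => (d ij : ℂ)) * star (K : Matrix (A × B) (A × B) ℂ) := by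
    rw [hσdec, hτdec]
    rw [show star (K : Matrix (A × B) (A × B) ℂ)
        = star (Vσ : Matrix A A ℂ) ⊗ₖ star (V : Matrix B B ℂ) from by
      simp only [hK, Matrix.star_eq_conjTranspose]; exact kron_conjTranspose _ _]
    rw [hK]
    rw [show (Matrix.diagonal fun ij : A × B => ((d ij : ℝ) : ℂ))
        = Matrix.diagonal (fun ij : A × B => (p ij.1 : ℂ) * (q ij.2 : ℂ)) from by
      congr 1; ext ij; rw [hd]; push_cast; rfl]
    simp only [Matrix.mul_kronecker_mul, Matrix.diagonal_kronecker_diagonal]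
  have hmlogX := mlog_of_decomp K d _ hXdec
  -- trace of X * mlog X
  have ht1 : ((σm ⊗ₖ τm) * mlog (σm ⊗ₖ τm)).trace
      = ((∑ ij : A × B, d ij * Real.log (d ij) : ℝ) : ℂ) := by
    rw [hmlogX, hXdec]
    exact trace_conj_diag_mul K d (fun ij => Real.log (d ij))
  -- split the entropy sum
  have hsum : ∑ ij : A × B, d ij * Real.log (d ij)
      = (∑ i, p i * Real.log (p i)) + (∑ j, q j * Real.log (q j)) := by
    rw [Fintype.sum_prod_type]
    simp only [hd]
    have pw : ∀ (x y : ℝ), (x * y) * Real.log (x * y)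
        = (x * Real.log x) * y + x * (y * Real.log y) := by
      intro x y
      rcases eq_or_ne x 0 with hx | hx
      · simp [hx]
      rcases eq_or_ne y 0 with hy | hy
      · simp [hy]
      rw [Real.log_mul hx hy]; ring
    calc ∑ i, ∑ j, (p i * q j) * Real.log (p i * q j)
        = ∑ i, ∑ j, ((p i * Real.log (p i)) * q j + p i * (q j * Real.log (q j))) := by
          exact Finset.sum_congr rfl fun i _ => Finset.sum_congr rfl fun j _ => pw (p i) (q j)
      _ = (∑ i, (p i * Real.log (p i)) * (∑ j, q j))
            + (∑ i, p i * (∑ j, q j * Real.log (q j))) := by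
          rw [← Finset.sum_add_distrib]
          refine Finset.sum_congr rfl fun i _ => ?_
          rw [Finset.sum_add_distrib, Finset.mul_sum, Finset.mul_sum]
      _ = (∑ i, p i * Real.log (p i)) + (∑ j, q j * Real.log (q j)) := by
          rw [hq1]
          simp only [mul_one]
          rw [← Finset.sum_mul, hp1, one_mul]
  -- trace of X * mlog ρ
  have ht2 : ((σm ⊗ₖ τm) * mlog ρm).trace
      = (τm * ptrA ((σm ⊗ₖ (1 : Matrix B B ℂ)) * mlog ρm)).trace := by
    rw [show σm ⊗ₖ τm = Matrix.kroneckerMap (fun x1 x2 => x1 * x2) σm τm from rfl]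
    exact trace_kron_mul σm τm (mlog ρm)
  rw [Matrix.mul_sub, Matrix.trace_sub, ht2, Complex.sub_re, ht1, hsum, Complex.ofReal_re]

lemma spectral' {X : Matrix n n ℂ} (hX : X.IsHermitian) :
    X = (hX.eigenvectorUnitary : Matrix n n ℂ) *
      Matrix.diagonal (fun i => ((hX.eigenvalues i : ℝ) : ℂ)) *
      star (hX.eigenvectorUnitary : Matrix n n ℂ) := hX.spectral_theorem

end Aux

open Aux in
/-- Gibbs-form partial minimizer for the tumula information (Theorem 2(a)). -/
theorem tumula_partial_minimizer {A B : Type*} [Fintype A] [DecidableEq A] [Nonempty A]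
    [Fintype B] [DecidableEq B] [Nonempty B]
    (ρ : MState (A × B)) (hρ : ρ.mat.PosDef) (σ : MState A)
    (M : Matrix B B ℂ)
    (hM : M = ptrA ((σ.mat ⊗ₖ (1 : Matrix B B ℂ)) * mlog ρ.mat))
    (τstar : Matrix B B ℂ)
    (hτstar : τstar = ((NormedSpace.exp M).trace)⁻¹ • NormedSpace.exp M) :
    τstar.PosSemidef ∧ τstar.trace = 1 ∧
      ∀ τ : MState B, relEnt (σ.mat ⊗ₖ τstar) ρ.mat ≤ relEnt (σ.mat ⊗ₖ τ.mat) ρ.mat := by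
  classical
  have hσH : σ.mat.IsHermitian := σ.posSemidef.1
  have hρH : ρ.mat.IsHermitian := ρ.posSemidef.1
  have hLH : (mlog ρ.mat).IsHermitian := by
    rw [mlog, dif_pos hρH]
    exact isHermitian_conj_diag hρH.eigenvectorUnitary (fun i => Real.log (hρH.eigenvalues i))
  have hMH : M.IsHermitian := by rw [hM]; exact M_isHermitian σ.mat (mlog ρ.mat) hσH hLH
  set Vσ := hσH.eigenvectorUnitary with hVσ
  set p : A → ℝ := hσH.eigenvalues with hp
  have hσdec : σ.mat = (Vσ : Matrix A A ℂ) * Matrix.diagonal (fun i => (p i : ℂ)) *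
      star (Vσ : Matrix A A ℂ) := spectral' hσH
  have hp1 : ∑ i, p i = 1 := by
    have h := trace_eq_sum_eigen σ.mat hσH
    rw [σ.trace_one] at h
    exact_mod_cast h.symm
  set W := hMH.eigenvectorUnitary with hWdef
  set m : B → ℝ := hMH.eigenvalues with hm
  have hMdec : M = (W : Matrix B B ℂ) * Matrix.diagonal (fun j => (m j : ℂ)) *
      star (W : Matrix B B ℂ) := spectral' hMH
  set Z : ℝ := ∑ j, Real.exp (m j) with hZ
  have hZpos : 0 < Z := Finset.sum_pos (fun j _ => Real.exp_pos _) Finset.univ_nonempty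
  have hWunit : IsUnit (W : Matrix B B ℂ) := ⟨Unitary.toUnits W, rfl⟩
  have hWinv : (W : Matrix B B ℂ)⁻¹ = star (W : Matrix B B ℂ) :=
    Matrix.inv_eq_right_inv ((Matrix.mem_unitaryGroup_iff).mp W.2)
  have hexp : NormedSpace.exp M
      = (W : Matrix B B ℂ) * Matrix.diagonal (fun j => ((Real.exp (m j) : ℝ) : ℂ)) *
        star (W : Matrix B B ℂ) := by
    rw [hMdec, ← hWinv, Matrix.exp_conj _ _ hWunit, Matrix.exp_diagonal]
    rw [show (NormedSpace.exp fun j => ((m j : ℝ) : ℂ))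
        = fun j => ((Real.exp (m j) : ℝ) : ℂ) from by
      funext j
      rw [Pi.coe_exp, ← Complex.exp_eq_exp_ℂ, Complex.ofReal_exp]]
  have htrexp : (NormedSpace.exp M).trace = ((Z : ℝ) : ℂ) := by
    rw [hexp]; exact trace_conj_diag W (fun j => Real.exp (m j))
  set r : B → ℝ := fun j => Real.exp (m j) / Z with hr
  have hr0 : ∀ j, 0 ≤ r j := fun j => div_nonneg (Real.exp_pos _).le hZpos.le
  have hrpos : ∀ j, 0 < r j := fun j => div_pos (Real.exp_pos _) hZpos
  have hr1 : ∑ j, r j = 1 := by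
    rw [hr, ← Finset.sum_div, ← hZ, div_self hZpos.ne']
  have hτsdec : τstar = (W : Matrix B B ℂ) * Matrix.diagonal (fun j => (r j : ℂ)) *
      star (W : Matrix B B ℂ) := by
    rw [hτstar, htrexp, hexp, ← smul_mul_assoc, ← mul_smul_comm]
    rw [← Matrix.diagonal_smul]
    rw [show ((Z : ℂ))⁻¹ • (fun j => ((Real.exp (m j) : ℝ) : ℂ))
        = fun j => ((r j : ℝ) : ℂ) from by
      funext j
      rw [Pi.smul_apply, smul_eq_mul, hr]
      push_cast
      rw [div_eq_inv_mul]]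
  have hPSD : τstar.PosSemidef := by
    rw [hτsdec, Matrix.star_eq_conjTranspose]
    exact (Matrix.posSemidef_diagonal_iff.mpr fun j =>
      Complex.zero_le_real.mpr (hr0 j)).mul_mul_conjTranspose_same _
  have htrτs : τstar.trace = 1 := by
    rw [hτsdec, trace_conj_diag, hr1, Complex.ofReal_one]
  refine ⟨hPSD, htrτs, fun τ => ?_⟩
  have hτH : τ.mat.IsHermitian := τ.posSemidef.1
  set V := hτH.eigenvectorUnitary with hVdef
  set q : B → ℝ := hτH.eigenvalues with hq
  have hq0 : ∀ i, 0 ≤ q i := fun i => τ.posSemidef.eigenvalues_nonneg i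
  have hτdec : τ.mat = (V : Matrix B B ℂ) * Matrix.diagonal (fun i => (q i : ℂ)) *
      star (V : Matrix B B ℂ) := spectral' hτH
  have hq1 : ∑ i, q i = 1 := by
    have h := trace_eq_sum_eigen τ.mat hτH
    rw [τ.trace_one] at h
    exact_mod_cast h.symm
  rw [relEnt_formula ρ.mat hρ σ.mat Vσ p hσdec hp1 τstar W r hτsdec hr1,
      relEnt_formula ρ.mat hρ σ.mat Vσ p hσdec hp1 τ.mat V q hτdec hq1, ← hM,
      EReal.coe_le_coe_iff]
  have hLHStr : ((τstar * M).trace).re = ∑ j, r j * m j := by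
    rw [hτsdec, hMdec, trace_conj_diag_mul W r m, Complex.ofReal_re]
  set C := star (V : Matrix B B ℂ) * (W : Matrix B B ℂ) with hC
  set c : B → B → ℝ := fun i j => Complex.normSq (C i j) with hc
  have hc0 : ∀ i j, 0 ≤ c i j := fun i j => Complex.normSq_nonneg _
  have hCU : C ∈ Matrix.unitaryGroup B ℂ := mul_mem (Unitary.star_mem V.2) W.2
  have hrow : ∀ i, ∑ j, c i j = 1 := by
    intro i
    have h1 : (C * star C) i i = 1 := by
      rw [(Matrix.mem_unitaryGroup_iff).mp hCU]; simp [Matrix.one_apply]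
    rw [Matrix.mul_apply] at h1
    have h2 : ∀ j, C i j * star C j i = ((c i j : ℝ) : ℂ) := by
      intro j
      rw [Matrix.star_apply, RCLike.star_def, Complex.mul_conj]
    rw [Finset.sum_congr rfl (fun j _ => h2 j)] at h1
    exact_mod_cast h1
  have hcol : ∀ j, ∑ i, c i j = 1 := by
    intro j
    have h1 : (star C * C) j j = 1 := by
      rw [(Matrix.mem_unitaryGroup_iff').mp hCU]; simp [Matrix.one_apply]
    rw [Matrix.mul_apply] at h1
    have h2 : ∀ i, star C j i * C i j = ((c i j : ℝ) : ℂ) := by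
      intro i
      rw [Matrix.star_apply, RCLike.star_def, mul_comm, Complex.mul_conj]
    rw [Finset.sum_congr rfl (fun i _ => h2 i)] at h1
    exact_mod_cast h1
  set s : B → ℝ := fun j => ∑ i, q i * c i j with hs
  have hs0 : ∀ j, 0 ≤ s j := fun j =>
    Finset.sum_nonneg fun i _ => mul_nonneg (hq0 i) (hc0 i j)
  have hs1 : ∑ j, s j = 1 := by
    rw [hs]
    rw [Finset.sum_comm]
    calc ∑ i, ∑ j, q i * c i j = ∑ i, q i * ∑ j, c i j := by
          exact Finset.sum_congr rfl fun i _ => (Finset.mul_sum _ _ _).symm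
      _ = 1 := by
          rw [Finset.sum_congr rfl fun i _ => by rw [hrow i, mul_one]]
          exact hq1
  have hRHStr : ((τ.mat * M).trace).re = ∑ j, s j * m j := by
    rw [hτdec, hMdec, trace_cross V W q m, Complex.ofReal_re, ← hC]
    rw [Finset.sum_comm]
    refine Finset.sum_congr rfl fun j _ => ?_
    rw [hs, Finset.sum_mul]
    exact Finset.sum_congr rfl fun i _ => by rw [hc]; ring
  rw [hLHStr, hRHStr]
  have hlogr : ∀ j, Real.log (r j) = m j - Real.log Z := by
    intro j
    rw [hr, Real.log_div (Real.exp_ne_zero _) hZpos.ne', Real.log_exp]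
  have hLHSval : ∑ j, r j * Real.log (r j) = (∑ j, r j * m j) - Real.log Z := by
    calc ∑ j, r j * Real.log (r j) = ∑ j, (r j * m j - r j * Real.log Z) := by
          refine Finset.sum_congr rfl fun j _ => ?_
          rw [hlogr j]; ring
      _ = (∑ j, r j * m j) - (∑ j, r j) * Real.log Z := by
          rw [Finset.sum_sub_distrib, Finset.sum_mul]
      _ = (∑ j, r j * m j) - Real.log Z := by rw [hr1, one_mul]
  have hjensen : ∑ j, s j * Real.log (s j) ≤ ∑ i, q i * Real.log (q i) := by
    have h1 : ∀ j, s j * Real.log (s j) ≤ ∑ i, c i j * (q i * Real.log (q i)) := by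
      intro j
      have h2 := Real.convexOn_mul_log.map_sum_le (t := Finset.univ)
        (w := fun i => c i j) (p := q) (fun i _ => hc0 i j) (hcol j)
        (fun i _ => Set.mem_Ici.mpr (hq0 i))
      have h3 : ∑ i, c i j • q i = s j := by
        rw [hs]
        exact Finset.sum_congr rfl fun i _ => by rw [smul_eq_mul, mul_comm]
      rw [h3] at h2
      simpa [smul_eq_mul] using h2
    calc ∑ j, s j * Real.log (s j) ≤ ∑ j, ∑ i, c i j * (q i * Real.log (q i)) :=
          Finset.sum_le_sum fun j _ => h1 j
      _ = ∑ i, (∑ j, c i j) * (q i * Real.log (q i)) := by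
          rw [Finset.sum_comm]
          exact Finset.sum_congr rfl fun i _ => (Finset.sum_mul _ _ _).symm
      _ = ∑ i, q i * Real.log (q i) := by
          exact Finset.sum_congr rfl fun i _ => by rw [hrow i, one_mul]
  have hgibbs : (∑ j, s j * m j) - Real.log Z ≤ ∑ j, s j * Real.log (s j) := by
    have hpt : ∀ j, s j - r j ≤ s j * Real.log (s j) - s j * Real.log (r j) := by
      intro j
      rcases eq_or_lt_of_le (hs0 j) with h0 | h0
      · rw [← h0]; simp [hr0 j]
      · have hlog := Real.log_le_sub_one_of_pos (div_pos (hrpos j) h0)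
        rw [Real.log_div (hrpos j).ne' h0.ne'] at hlog
        have h4 := mul_le_mul_of_nonneg_left hlog h0.le
        have h5 : s j * (r j / s j - 1) = r j - s j := by
          field_simp
        rw [h5, mul_sub] at h4
        linarith
    have hsum := Finset.sum_le_sum (fun j (_ : j ∈ Finset.univ) => hpt j)
    rw [Finset.sum_sub_distrib, Finset.sum_sub_distrib, hs1, hr1, sub_self] at hsum
    have h5 : ∑ j, s j * Real.log (r j) = (∑ j, s j * m j) - Real.log Z := by
      calc ∑ j, s j * Real.log (r j) = ∑ j, (s j * m j - s j * Real.log Z) := by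
            refine Finset.sum_congr rfl fun j _ => ?_
            rw [hlogr j]; ring
        _ = (∑ j, s j * m j) - (∑ j, s j) * Real.log Z := by
            rw [Finset.sum_sub_distrib, Finset.sum_mul]
        _ = (∑ j, s j * m j) - Real.log Z := by rw [hs1, one_mul]
    linarith
  linarith

end
end
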